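/- arXiv:1211.4733 — 11 statements merged into one kernel-verified Lean document; each statement's English description precedes it below -/
import Mathlib

section
/- Let n be an odd perfect number and let α be a positive integer such that α ≤ h_p for every prime p dividing n, where h_p is the exponent of p in the prime factorisation of n. Then 2^{α+2} / (ζ(α+1) · (2^{α+1} − 1)) < ∏_{p | n} ∑_{i=0}^{α} p^{-i}, where ζ is the Riemann zeta function. -/
open Finset

private lemma geom_aux {x : ℝ} (hx0 : 0 < x) (hx1 : x < 1) (h m : ℕ) :
    ∑ i ∈ range (h + 1), x ^ i < (∑ i ∈ range (m + 1), x ^ i) * (1 - x ^ (m + 1))⁻¹ := by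
  have hne : x ≠ 1 := ne_of_lt hx1
  have hx : 0 < 1 - x := by linarith
  have hm : x ^ (m + 1) < 1 := pow_lt_one₀ hx0.le hx1 (Nat.succ_ne_zero m)
  have hm' : 0 < x ^ (m + 1) := pow_pos hx0 _
  have hh : 0 < x ^ (h + 1) := pow_pos hx0 _
  rw [geom_sum_eq hne, geom_sum_eq hne]
  have key : (x ^ (m + 1) - 1) / (x - 1) * (1 - x ^ (m + 1))⁻¹ = (1 - x)⁻¹ := by
    have hne2 : 1 - x ^ (m + 1) ≠ 0 := by linarith
    have hne3 : x - 1 ≠ 0 := by intro hc; apply hne; linarith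
    field_simp
    ring
  rw [key, div_lt_iff_of_neg (by linarith : x - 1 < 0)]
  have h1 : (1 - x)⁻¹ * (x - 1) = -1 := by
    field_simp
    ring
  rw [h1]
  linarith

private lemma cast_div_aux {p : ℕ} (hp : 1 < p) (h : ℕ) :
    ((∑ i ∈ range (h + 1), p ^ i : ℕ) : ℝ) / (p : ℝ) ^ h
      = ∑ i ∈ range (h + 1), (1 / (p : ℝ)) ^ i := by
  have hp0 : (0 : ℝ) < p := by exact_mod_cast Nat.zero_lt_of_lt hp
  push_cast
  rw [div_eq_iff (by positivity), Finset.sum_mul,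
    ← Finset.sum_range_reflect (fun i => (p : ℝ) ^ i) (h + 1)]
  refine Finset.sum_congr rfl fun i hi => ?_
  have hih : i ≤ h := Nat.lt_succ_iff.mp (mem_range.mp hi)
  have he : h + 1 - 1 - i = h - i := by omega
  rw [he, pow_sub₀ _ (ne_of_gt hp0) hih, one_div, inv_pow]
  ring

/-- If `n` is an odd perfect number and `α` is a positive integer with `α ≤ h_p` for every
prime `p ∣ n` (`h_p` the exponent of `p` in `n`), then
`2^(α+2) / (ζ(α+1) · (2^(α+1) − 1)) < ∏_{p ∣ n} ∑_{i=0}^{α} p^{-i}`,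
where `ζ(α+1) = ∑_{k ≥ 1} 1/k^(α+1)` is the Riemann zeta function. -/
theorem opn_lower_bound (n α : ℕ) (hn : Nat.Perfect n) (hodd : Odd n) (hα : 0 < α)
    (hle : ∀ p ∈ n.primeFactors, α ≤ n.factorization p) :
    (2 : ℝ) ^ (α + 2) /
        ((∑' k : ℕ, (1 : ℝ) / ((k : ℝ) + 1) ^ (α + 1)) * ((2 : ℝ) ^ (α + 1) - 1)) <
      ∏ p ∈ n.primeFactors,
        ∑ i ∈ Finset.range (α + 1), (1 : ℝ) / (p : ℝ) ^ i := by
  classical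
  have hn0 : n ≠ 0 := hn.2.ne'
  have hn1 : 1 < n := by
    have : n ≠ 1 := by rintro rfl; simpa using hn.1
    omega
  have hS : n.primeFactors.Nonempty := Nat.nonempty_primeFactors.mpr hn1
  have h2S : 2 ∉ n.primeFactors := by
    intro h
    have h2 : 2 ∣ n := Nat.dvd_of_mem_primeFactors h
    rw [Nat.odd_iff] at hodd
    omega
  -- the multiplicative function m ↦ m⁻¹ ^ (α+1)
  set f : ℕ →* ℝ :=
    { toFun := fun m => ((m : ℝ) ^ (α + 1))⁻¹
      map_one' := by simp
      map_mul' := fun m k => by push_cast; rw [mul_pow, mul_inv] } with hf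
  have hfsum : Summable (⇑f) := by
    have := (Real.summable_nat_pow_inv (p := α + 1)).mpr (by omega)
    simpa [hf] using this
  have hfnonneg : ∀ m, 0 ≤ f m := fun m => by
    simp only [hf, MonoidHom.coe_mk, OneHom.coe_mk]
    positivity
  have hf0 : f 0 = 0 := by simp [hf]
  have hζ : (∑' k : ℕ, (1 : ℝ) / ((k : ℝ) + 1) ^ (α + 1)) = ∑' m : ℕ, f m := by
    rw [Summable.tsum_eq_zero_add hfsum, hf0, zero_add]
    refine tsum_congr fun k => ?_
    simp [hf, one_div]
  set Z := ∑' m : ℕ, f m with hZ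
  have hZ1 : (1 : ℝ) ≤ Z := by
    have h1 := Summable.le_tsum hfsum 1 (fun j _ => hfnonneg j)
    simpa [hf, hZ] using h1
  have hZpos : (0 : ℝ) < Z := lt_of_lt_of_le one_pos hZ1
  -- even/odd decomposition
  have hesum : Summable fun k => f (2 * k) :=
    hfsum.comp_injective (fun a b hab => by omega)
  have hosum : Summable fun k => f (2 * k + 1) :=
    hfsum.comp_injective (fun a b hab => by omega)
  have heval : ∑' k, f (2 * k) = f 2 * Z := by
    rw [hZ, ← tsum_mul_left]
    exact tsum_congr fun k => by rw [← f.map_mul]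
  have hodd_sum : ∑' k, f (2 * k + 1) = (1 - f 2) * Z := by
    have h1 := tsum_even_add_odd hesum hosum
    rw [heval, ← hZ] at h1
    linarith
  -- Euler product over prime factors of n
  have hBeq : ∏ p ∈ n.primeFactors, (1 - f p)⁻¹
      = ∑' m : Nat.factoredNumbers n.primeFactors, f m := by
    have h1 := EulerProduct.prod_filter_prime_geometric_eq_tsum_factoredNumbers
      (F := ℝ) hfsum n.primeFactors
    rwa [Finset.filter_true_of_mem (fun p hp => Nat.prime_of_mem_primeFactors hp)] at h1
  have hodd_mem : ∀ m : ℕ, m ∈ Nat.factoredNumbers n.primeFactors → m % 2 = 1 := by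
    intro m hm
    obtain ⟨hm0, hmp⟩ := hm
    rcases Nat.even_or_odd m with he | ho
    · exfalso
      have h2 : 2 ∈ m.primeFactorsList :=
        (Nat.mem_primeFactorsList hm0).mpr ⟨Nat.prime_two, even_iff_two_dvd.mp he⟩
      exact h2S (hmp 2 h2)
    · exact Nat.odd_iff.mp ho
  have hsub : Summable fun m : Nat.factoredNumbers n.primeFactors => f m := hfsum.subtype _
  have hBle : ∑' m : Nat.factoredNumbers n.primeFactors, f m ≤ ∑' k, f (2 * k + 1) := by
    refine Summable.tsum_le_tsum_of_inj (fun m => ((m : ℕ) - 1) / 2) ?_ (fun c _ => hfnonneg _) ?_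
      hsub hosum
    · intro a b hab
      have ha := hodd_mem _ a.2
      have hb := hodd_mem _ b.2
      apply Subtype.ext
      simp only at hab
      omega
    · intro m
      have hm := hodd_mem _ m.2
      have he : 2 * (((m : ℕ) - 1) / 2) + 1 = (m : ℕ) := by omega
      exact le_of_eq (by rw [he])
  have hBZ : ∏ p ∈ n.primeFactors, (1 - f p)⁻¹ ≤ (1 - f 2) * Z := by
    rw [hBeq, ← hodd_sum]; exact hBle
  -- the identity 2 = ∏ (σ(p^h)/p^h)
  have hσ : ∑ d ∈ n.divisors, d = 2 * n :=
    (Nat.perfect_iff_sum_divisors_eq_two_mul hn.2).mp hn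
  have hprodnat : ∏ p ∈ n.primeFactors, ∑ k ∈ range (n.factorization p + 1), p ^ k = 2 * n := by
    rw [← Nat.sum_divisors hn0, hσ]
  have hdennat : ∏ p ∈ n.primeFactors, p ^ n.factorization p = n := by
    conv_rhs => rw [← Nat.factorization_prod_pow_eq_self hn0]
    rw [Finsupp.prod, Nat.support_factorization]
  have hT : ∏ p ∈ n.primeFactors,
      (∑ i ∈ range (n.factorization p + 1), (1 / (p : ℝ)) ^ i) = 2 := by
    have hcast : ∀ p ∈ n.primeFactors,
        (∑ i ∈ range (n.factorization p + 1), (1 / (p : ℝ)) ^ i)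
          = ((∑ i ∈ range (n.factorization p + 1), p ^ i : ℕ) : ℝ)
            / (p : ℝ) ^ (n.factorization p) := fun p hp =>
      (cast_div_aux (Nat.prime_of_mem_primeFactors hp).one_lt _).symm
    rw [Finset.prod_congr rfl hcast, Finset.prod_div_distrib, ← Nat.cast_prod, hprodnat]
    have hden : ∏ p ∈ n.primeFactors, (p : ℝ) ^ n.factorization p = (n : ℝ) := by
      exact_mod_cast congrArg (Nat.cast : ℕ → ℝ) hdennat
    rw [hden]
    have : (n : ℝ) ≠ 0 := Nat.cast_ne_zero.mpr hn0
    push_cast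
    field_simp
  -- per-prime strict inequality: σ(p^h)/p^h < (∑_{i≤α} p^{-i}) · (1 - p^{-(α+1)})⁻¹
  set A := ∏ p ∈ n.primeFactors, ∑ i ∈ range (α + 1), (1 / (p : ℝ)) ^ i with hA
  have hkey : (2 : ℝ) < A * ∏ p ∈ n.primeFactors, (1 - f p)⁻¹ := by
    rw [← hT, hA, ← Finset.prod_mul_distrib]
    refine Finset.prod_lt_prod_of_nonempty (fun p hp => ?_) (fun p hp => ?_) hS
    · have hp1 : (1 : ℝ) < p := by
        exact_mod_cast (Nat.prime_of_mem_primeFactors hp).one_lt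
      exact Finset.sum_pos (fun i _ => by positivity) ⟨0, mem_range.mpr (Nat.succ_pos _)⟩
    · have hp1 : (1 : ℝ) < p := by
        exact_mod_cast (Nat.prime_of_mem_primeFactors hp).one_lt
      have hx0 : 0 < 1 / (p : ℝ) := by positivity
      have hx1 : 1 / (p : ℝ) < 1 := by
        rw [div_lt_one (by linarith)]; linarith
      have hgeo := geom_aux hx0 hx1 (n.factorization p) α
      have hfp : f p = (1 / (p : ℝ)) ^ (α + 1) := by
        simp only [hf, MonoidHom.coe_mk, OneHom.coe_mk, one_div, inv_pow]
      rw [hfp]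
      exact hgeo
  have hApos : 0 < A := Finset.prod_pos fun p hp => by
    have hp1 : (1 : ℝ) < p := by
      exact_mod_cast (Nat.prime_of_mem_primeFactors hp).one_lt
    exact Finset.sum_pos (fun i _ => by positivity) ⟨0, mem_range.mpr (Nat.succ_pos _)⟩
  have hchain : (2 : ℝ) < A * ((1 - f 2) * Z) :=
    hkey.trans_le (mul_le_mul_of_nonneg_left hBZ hApos.le)
  have hgoalA : ∏ p ∈ n.primeFactors, ∑ i ∈ Finset.range (α + 1), (1 : ℝ) / (p : ℝ) ^ i = A := by
    rw [hA]
    refine Finset.prod_congr rfl fun p _ => Finset.sum_congr rfl fun i _ => ?_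
    rw [one_div, one_div, inv_pow]
  rw [hζ, hgoalA]
  have hf2 : f 2 = ((2 : ℝ) ^ (α + 1))⁻¹ := by
    simp [hf]
  have h2pow : (0 : ℝ) < 2 ^ (α + 1) := by positivity
  have h2p1 : (2 : ℝ) ≤ 2 ^ (α + 1) := by
    calc (2 : ℝ) = 2 ^ 1 := (pow_one 2).symm
    _ ≤ 2 ^ (α + 1) := pow_le_pow_right₀ one_le_two (by omega)
  rw [div_lt_iff₀ (by nlinarith : (0 : ℝ) < Z * ((2 : ℝ) ^ (α + 1) - 1))]
  rw [hf2] at hchain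
  have hmul := mul_lt_mul_of_pos_right hchain h2pow
  calc (2 : ℝ) ^ (α + 2) = 2 * 2 ^ (α + 1) := by ring
  _ < A * ((1 - ((2 : ℝ) ^ (α + 1))⁻¹) * Z) * 2 ^ (α + 1) := hmul
  _ = A * (Z * ((2 : ℝ) ^ (α + 1) - 1)) := by
      have e : (1 - ((2 : ℝ) ^ (α + 1))⁻¹) * 2 ^ (α + 1) = 2 ^ (α + 1) - 1 := by
        field_simp
      rw [← e]; ring
end

section
/- If n is an odd perfect number, then 16/π² < ∏_{p | n} (1 + 1/p) < 2, where the product runs over the distinct prime factors p of n. -/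
open Finset Real

namespace OPNAux

/-- The completely multiplicative function `m ↦ 1/m²` as a monoid hom. -/
noncomputable def invSqHom : ℕ →* ℝ where
  toFun m := 1 / (m : ℝ) ^ 2
  map_one' := by norm_num
  map_mul' m n := by
    push_cast
    rw [mul_pow, one_div, mul_inv, one_div, one_div]

@[simp] lemma invSqHom_apply (m : ℕ) : invSqHom m = 1 / (m : ℝ) ^ 2 := rfl

/-- Sum of reciprocals of squares of odd numbers. -/
lemma hasSum_odd : HasSum (fun k : ℕ => (1 : ℝ) / ((2 * k + 1 : ℕ) : ℝ) ^ 2) (π ^ 2 / 8) := by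
  set f : ℕ → ℝ := fun n => 1 / (n : ℝ) ^ 2 with hf
  have htot : HasSum f (π ^ 2 / 6) := hasSum_zeta_two
  have he : HasSum (fun k => f (2 * k)) (π ^ 2 / 6 * (1 / 4)) := by
    have hfun : (fun k : ℕ => f (2 * k)) = fun k : ℕ => f k * (1 / 4) := by
      funext k
      simp only [hf]
      push_cast
      rw [show ((2 : ℝ) * (k : ℝ)) ^ 2 = (k : ℝ) ^ 2 * 4 by ring, ← one_div_mul_one_div]
    rw [hfun]
    exact htot.mul_right _
  have hsm : Summable (fun k : ℕ => f (2 * k + 1)) :=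
    htot.summable.comp_injective (fun a b hab => by omega)
  have ho : HasSum (fun k : ℕ => f (2 * k + 1)) (∑' k, f (2 * k + 1)) := hsm.hasSum
  have huniq := htot.unique (he.even_add_odd ho)
  have hval : ∑' k : ℕ, f (2 * k + 1) = π ^ 2 / 8 := by linarith
  rw [← hval]
  exact ho

lemma hasSum_indicator_odd :
    HasSum (Set.indicator {m : ℕ | Odd m} (fun m => (1 : ℝ) / (m : ℝ) ^ 2)) (π ^ 2 / 8) := by
  have hinj : Function.Injective (fun k : ℕ => 2 * k + 1) := fun a b hab => by
    simp only at hab; omega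
  have hvanish : ∀ m ∉ Set.range (fun k : ℕ => 2 * k + 1),
      Set.indicator {m : ℕ | Odd m} (fun m => (1 : ℝ) / (m : ℝ) ^ 2) m = 0 := by
    intro m hm
    apply Set.indicator_of_notMem
    simp only [Set.mem_setOf_eq]
    intro hmo
    obtain ⟨k, rfl⟩ := hmo
    exact hm ⟨k, rfl⟩
  rw [← hinj.hasSum_iff hvanish]
  have hcomp : (Set.indicator {m : ℕ | Odd m} (fun m => (1 : ℝ) / (m : ℝ) ^ 2))
      ∘ (fun k : ℕ => 2 * k + 1) = fun k : ℕ => (1 : ℝ) / ((2 * k + 1 : ℕ) : ℝ) ^ 2 := by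
    funext k
    have : (2 * k + 1) ∈ {m : ℕ | Odd m} := ⟨k, rfl⟩
    simp only [Function.comp_apply, Set.indicator_of_mem this]
  rw [hcomp]
  exact hasSum_odd

lemma prod_le_pi (s : Finset ℕ) (hp : ∀ p ∈ s, Nat.Prime p) (ho : ∀ p ∈ s, Odd p) :
    ∏ p ∈ s, (1 - 1 / (p : ℝ) ^ 2)⁻¹ ≤ π ^ 2 / 8 := by
  have hlt : ∀ {p : ℕ}, p.Prime → ‖invSqHom p‖ < 1 := by
    intro p hep
    have h2 : (2 : ℝ) ≤ p := by exact_mod_cast hep.two_le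
    rw [invSqHom_apply, Real.norm_eq_abs, abs_of_nonneg (by positivity),
      div_lt_one (by positivity)]
    nlinarith
  obtain ⟨-, hsum⟩ :=
    EulerProduct.summable_and_hasSum_factoredNumbers_prod_filter_prime_geometric
      (f := invSqHom) hlt s
  rw [Finset.filter_true_of_mem hp] at hsum
  have hsub : (Nat.factoredNumbers s) ⊆ {m : ℕ | Odd m} := by
    intro m hm
    rcases Nat.mem_factoredNumbers.mp hm with ⟨hm0, hms⟩
    rw [Set.mem_setOf_eq, Nat.odd_iff]
    by_contra hme
    have h2m : 2 ∣ m := by omega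
    have h2f : 2 ∈ Nat.primeFactorsList m :=
      (Nat.mem_primeFactorsList hm0).mpr ⟨Nat.prime_two, h2m⟩
    have := ho 2 (hms 2 h2f)
    norm_num [Nat.odd_iff] at this
  have hindA : HasSum (Set.indicator (Nat.factoredNumbers s) (fun m => (1 : ℝ) / (m : ℝ) ^ 2))
      (∏ p ∈ s, (1 - invSqHom p)⁻¹) := by
    rw [← hasSum_subtype_iff_indicator]
    exact hsum
  have hle := hasSum_le
    (fun m => Set.indicator_le_indicator_of_subset hsub
      (fun a => by positivity) m)
    hindA hasSum_indicator_odd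
  simpa using hle

lemma sum_ge (x : ℝ) (hx : 1 ≤ x) {a : ℕ} (ha : 1 ≤ a) :
    (1 + 1 / x) * x ^ a ≤ ∑ k ∈ range (a + 1), x ^ k := by
  obtain ⟨b, rfl⟩ : ∃ b, a = b + 1 := ⟨a - 1, by omega⟩
  have hx0 : x ≠ 0 := by linarith
  have hsubset : ({b, b + 1} : Finset ℕ) ⊆ range (b + 1 + 1) := by
    intro k hk
    simp only [Finset.mem_insert, Finset.mem_singleton] at hk
    simp only [Finset.mem_range]
    omega
  have h2 : ∑ k ∈ ({b, b + 1} : Finset ℕ), x ^ k ≤ ∑ k ∈ range (b + 1 + 1), x ^ k :=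
    Finset.sum_le_sum_of_subset_of_nonneg hsubset
      (fun i _ _ => pow_nonneg (by linarith) i)
  rw [Finset.sum_insert (by simp), Finset.sum_singleton] at h2
  calc (1 + 1 / x) * x ^ (b + 1) = x ^ b + x ^ (b + 1) := by
        field_simp
        ring
    _ ≤ _ := h2

lemma sum_gt (x : ℝ) (hx : 1 ≤ x) {a : ℕ} (ha : 2 ≤ a) :
    (1 + 1 / x) * x ^ a < ∑ k ∈ range (a + 1), x ^ k := by
  obtain ⟨b, rfl⟩ : ∃ b, a = b + 2 := ⟨a - 2, by omega⟩
  have hx0 : x ≠ 0 := by linarith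
  have hsubset : ({b, b + 1, b + 2} : Finset ℕ) ⊆ range (b + 2 + 1) := by
    intro k hk
    simp only [Finset.mem_insert, Finset.mem_singleton] at hk
    simp only [Finset.mem_range]
    omega
  have h2 : ∑ k ∈ ({b, b + 1, b + 2} : Finset ℕ), x ^ k ≤ ∑ k ∈ range (b + 2 + 1), x ^ k :=
    Finset.sum_le_sum_of_subset_of_nonneg hsubset
      (fun i _ _ => pow_nonneg (by linarith) i)
  rw [Finset.sum_insert (by simp), Finset.sum_insert (by simp), Finset.sum_singleton] at h2
  have hb : (1 : ℝ) ≤ x ^ b := one_le_pow₀ hx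
  have key : (1 + 1 / x) * x ^ (b + 2) = x ^ (b + 1) + x ^ (b + 2) := by
    field_simp
    ring
  calc (1 + 1 / x) * x ^ (b + 2) = x ^ (b + 1) + x ^ (b + 2) := key
    _ < x ^ b + (x ^ (b + 1) + x ^ (b + 2)) := by linarith
    _ ≤ _ := h2

lemma sum_lt (x : ℝ) (hx : 1 < x) (a : ℕ) :
    (∑ k ∈ range (a + 1), x ^ k) * (1 - 1 / x) < x ^ a := by
  have hx0 : (0 : ℝ) < x := by linarith
  have key : (∑ k ∈ range (a + 1), x ^ k) * (x - 1) = x ^ (a + 1) - 1 := geom_sum_mul x (a + 1)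
  have heq : (∑ k ∈ range (a + 1), x ^ k) * (1 - 1 / x) = (x ^ (a + 1) - 1) / x := by
    rw [← key]
    field_simp
  rw [heq, div_lt_iff₀ hx0]
  have hs : x ^ (a + 1) = x ^ a * x := pow_succ x a
  linarith

end OPNAux

open OPNAux in
/-- If `n` is an odd perfect number, then `16/π² < ∏_{p ∣ n} (1 + 1/p) < 2`. -/
theorem opn_alpha_one_bounds (n : ℕ) (hn : Nat.Perfect n) (hodd : Odd n) :
    16 / Real.pi ^ 2 < ∏ p ∈ n.primeFactors, (1 + 1 / (p : ℝ)) ∧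
      ∏ p ∈ n.primeFactors, (1 + 1 / (p : ℝ)) < 2 := by
  have hn0 : 0 < n := hn.2
  have hσ : ∑ d ∈ n.divisors, d = 2 * n := (Nat.perfect_iff_sum_divisors_eq_two_mul hn0).mp hn
  have hfac : ∑ d ∈ n.divisors, d
      = ∏ p ∈ n.primeFactors, ∑ k ∈ range (n.factorization p + 1), p ^ k :=
    Nat.sum_divisors hn0.ne'
  have hnprod : ∏ p ∈ n.primeFactors, p ^ n.factorization p = n := by
    have := Nat.factorization_prod_pow_eq_self hn0.ne'
    rwa [Finsupp.prod, Nat.support_factorization] at this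
  set S := n.primeFactors with hS
  have hprime : ∀ p ∈ S, Nat.Prime p := fun p hp => Nat.prime_of_mem_primeFactors hp
  have hpodd : ∀ p ∈ S, Odd p := by
    intro p hp
    rw [Nat.odd_iff]
    by_contra hpe
    have h2p : 2 ∣ p := by omega
    have : 2 ∣ n := h2p.trans (Nat.dvd_of_mem_primeFactors hp)
    rw [Nat.odd_iff] at hodd
    omega
  have hp1 : ∀ p ∈ S, 1 ≤ n.factorization p := fun p hp =>
    (Nat.Prime.factorization_pos_of_dvd (hprime p hp) hn0.ne'
      (Nat.dvd_of_mem_primeFactors hp))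
  have hpx : ∀ p ∈ S, (1 : ℝ) < p := by
    intro p hp
    exact_mod_cast (hprime p hp).one_lt
  -- n > 1, hence S nonempty
  have hn1 : 1 < n := by
    by_contra hle
    push_neg at hle
    have hne1 : n = 1 := by omega
    subst hne1
    rw [Nat.divisors_one, Finset.sum_singleton] at hσ
    omega
  have hSne : S.Nonempty := Nat.nonempty_primeFactors.mpr hn1
  -- the key real product identity
  have h1 : ∏ p ∈ S, (∑ k ∈ range (n.factorization p + 1), (p : ℝ) ^ k) = 2 * n := by
    have : ((∏ p ∈ S, ∑ k ∈ range (n.factorization p + 1), p ^ k : ℕ) : ℝ)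
        = ((2 * n : ℕ) : ℝ) := by rw [← hfac, hσ]
    push_cast at this
    exact_mod_cast this
  have h2 : ∏ p ∈ S, ((p : ℝ) ^ n.factorization p) = n := by
    have : ((∏ p ∈ S, p ^ n.factorization p : ℕ) : ℝ) = (n : ℝ) := by rw [hnprod]
    push_cast at this
    exact this
  have hnR : (0 : ℝ) < n := by exact_mod_cast hn0
  have hprod2 : ∏ p ∈ S,
      ((∑ k ∈ range (n.factorization p + 1), (p : ℝ) ^ k) / (p : ℝ) ^ n.factorization p)
      = 2 := by
    rw [Finset.prod_div_distrib, h1, h2]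
    field_simp
  have hQpos : ∀ p ∈ S, (0 : ℝ) <
      (∑ k ∈ range (n.factorization p + 1), (p : ℝ) ^ k) / (p : ℝ) ^ n.factorization p := by
    intro p hp
    have hx := hpx p hp
    apply div_pos _ (pow_pos (by linarith) _)
    apply Finset.sum_pos (fun k _ => pow_pos (by linarith) k)
    exact ⟨0, Finset.mem_range.mpr (by omega)⟩
  -- not squarefree : some exponent ≥ 2
  have hex : ∃ p ∈ S, 2 ≤ n.factorization p := by
    by_contra hcon
    push_neg at hcon
    have hone : ∀ p ∈ S, n.factorization p = 1 := by
      intro p hp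
      have := hcon p hp
      have := hp1 p hp
      omega
    have hσ2 : ∏ p ∈ S, (1 + p) = 2 * n := by
      rw [← hσ, hfac]
      refine Finset.prod_congr rfl fun p hp => ?_
      rw [hone p hp]
      simp [Finset.sum_range_succ]
    rcases eq_or_lt_of_le (Finset.one_le_card.mpr hSne) with hcard | hcard
    · -- exactly one prime factor
      obtain ⟨p, hp⟩ := Finset.card_eq_one.mp hcard.symm
      have hpS : p ∈ S := by rw [hp]; exact Finset.mem_singleton_self p
      have hnp : n = p := by
        rw [← hnprod, hp, Finset.prod_singleton, hone p hpS, pow_one]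
      have hpp := (hprime p hpS).two_le
      rw [hp, Finset.prod_singleton] at hσ2
      omega
    · -- at least two prime factors
      obtain ⟨p, hpS, q, hqS, hpq⟩ := Finset.one_lt_card.mp hcard
      have hqS' : q ∈ S.erase p := Finset.mem_erase.mpr ⟨fun h => hpq h.symm, hqS⟩
      have e1 := Finset.mul_prod_erase S (fun r => 1 + r) hpS
      have e2 := Finset.mul_prod_erase (S.erase p) (fun r => 1 + r) hqS'
      obtain ⟨u, hu⟩ := hpodd p hpS
      obtain ⟨v, hv⟩ := hpodd q hqS
      rw [← e1, ← e2] at hσ2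
      set rest := ∏ x ∈ (S.erase p).erase q, (1 + x) with hrest
      have h4 : 4 * ((u + 1) * ((v + 1) * rest)) = 2 * n := by
        rw [← hσ2, hu, hv]; ring
      have hneven : n = 2 * ((u + 1) * ((v + 1) * rest)) := by omega
      rw [Nat.odd_iff] at hodd
      omega
  -- upper bound
  have hub : ∀ p ∈ S, (1 + 1 / (p : ℝ)) ≤
      (∑ k ∈ range (n.factorization p + 1), (p : ℝ) ^ k) / (p : ℝ) ^ n.factorization p := by
    intro p hp
    have hx := hpx p hp
    rw [le_div_iff₀ (pow_pos (by linarith) _)]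
    exact sum_ge _ hx.le (hp1 p hp)
  have hupper : ∏ p ∈ S, (1 + 1 / (p : ℝ)) < 2 := by
    rw [← hprod2]
    refine Finset.prod_lt_prod (fun p hp => by positivity) hub ?_
    obtain ⟨p₀, hp₀, h2a⟩ := hex
    refine ⟨p₀, hp₀, ?_⟩
    have hx := hpx p₀ hp₀
    rw [lt_div_iff₀ (pow_pos (by linarith) _)]
    exact sum_gt _ hx.le h2a
  -- lower bound
  have h2lt : (2 : ℝ) < ∏ p ∈ S, (1 - 1 / (p : ℝ))⁻¹ := by
    rw [← hprod2]
    refine Finset.prod_lt_prod_of_nonempty hQpos (fun p hp => ?_) hSne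
    have hx := hpx p hp
    have hpos1 : (0 : ℝ) < 1 - 1 / (p : ℝ) := by
      rw [sub_pos, div_lt_one (by linarith)]
      exact hx
    rw [inv_eq_one_div, div_lt_div_iff₀ (pow_pos (by linarith) _) hpos1, one_mul]
    exact sum_lt _ hx _
  have hsplit : ∏ p ∈ S, (1 - 1 / (p : ℝ))⁻¹
      = (∏ p ∈ S, (1 + 1 / (p : ℝ))) * ∏ p ∈ S, (1 - 1 / (p : ℝ) ^ 2)⁻¹ := by
    rw [← Finset.prod_mul_distrib]
    refine Finset.prod_congr rfl fun p hp => ?_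
    have hx := hpx p hp
    have hx0 : (0 : ℝ) < p := by linarith
    have hne1 : 1 - 1 / (p : ℝ) ≠ 0 := by
      have : 1 / (p : ℝ) < 1 := by rw [div_lt_one hx0]; exact hx
      intro h; rw [sub_eq_zero] at h; rw [← h] at this; exact lt_irrefl _ this
    have hxne : (p : ℝ) ≠ 0 := ne_of_gt hx0
    have hne1' : (1 : ℝ) + 1 / (p : ℝ) ≠ 0 := by positivity
    have key : (1 : ℝ) - 1 / (p : ℝ) ^ 2 = (1 - 1 / (p : ℝ)) * (1 + 1 / (p : ℝ)) := by
      field_simp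
      ring
    rw [key, mul_inv, mul_comm ((1 - 1 / (p : ℝ))⁻¹), ← mul_assoc,
      mul_inv_cancel₀ hne1', one_mul]
  have hπle := prod_le_pi S hprime hpodd
  have hApos : (0 : ℝ) < ∏ p ∈ S, (1 + 1 / (p : ℝ)) :=
    Finset.prod_pos fun p hp => by positivity
  have hC : (2 : ℝ) < (∏ p ∈ S, (1 + 1 / (p : ℝ))) * (π ^ 2 / 8) :=
    calc (2 : ℝ) < ∏ p ∈ S, (1 - 1 / (p : ℝ))⁻¹ := h2lt
      _ = (∏ p ∈ S, (1 + 1 / (p : ℝ))) * ∏ p ∈ S, (1 - 1 / (p : ℝ) ^ 2)⁻¹ := hsplit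
      _ ≤ (∏ p ∈ S, (1 + 1 / (p : ℝ))) * (π ^ 2 / 8) :=
        mul_le_mul_of_nonneg_left hπle hApos.le
  constructor
  · have hπ0 : (0 : ℝ) < π ^ 2 := by positivity
    rw [div_lt_iff₀ hπ0]
    nlinarith [hC]
  · exact hupper
end

section
/- Let n be an odd perfect number such that h_p ≥ 2 for every prime p dividing n, where h_p is the exponent of p in the prime factorisation of n. Then 16/(7·ζ(3)) < ∏_{p | n} (1 + 1/p + 1/p²), where the product runs over the distinct prime factors p of n and ζ is the Riemann zeta function. -/
open Finset Set

/-- The completely multiplicative function `m ↦ 1/m³` as a monoid hom `ℕ →* ℝ`. -/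
private noncomputable def fcube : ℕ →* ℝ where
  toFun m := ((m : ℝ)⁻¹) ^ 3
  map_one' := by norm_num
  map_mul' m n := by push_cast; rw [mul_inv, mul_pow]

private lemma fcube_apply (m : ℕ) : fcube m = 1 / (m : ℝ) ^ 3 := by
  simp [fcube, inv_pow, one_div]

private lemma fcube_nonneg (m : ℕ) : 0 ≤ fcube m := by
  rw [fcube_apply]; positivity

private lemma fcube_summable : Summable (⇑fcube) := by
  have h : Summable (fun m : ℕ ↦ 1 / (m : ℝ) ^ 3) :=
    Real.summable_one_div_nat_pow.2 (by norm_num)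
  exact h.congr fun m ↦ (fcube_apply m).symm

private lemma key_id (p : ℕ) (hp : 2 ≤ p) :
    (1 - 1 / (p : ℝ))⁻¹ = (1 + 1 / (p : ℝ) + 1 / (p : ℝ) ^ 2) * (1 - fcube p)⁻¹ := by
  have hp1 : (1 : ℝ) < p := by exact_mod_cast hp
  have h1 : (1 : ℝ) - 1 / p ≠ 0 := by
    have : 1 / (p : ℝ) < 1 := by rw [div_lt_one (by linarith)]; exact hp1
    linarith
  have hp3 : (1 : ℝ) < (p : ℝ) ^ 3 := one_lt_pow₀ hp1 (by norm_num)
  have h3 : (1 : ℝ) - 1 / (p : ℝ) ^ 3 ≠ 0 := by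
    have : 1 / ((p : ℝ) ^ 3) < 1 := by rw [div_lt_one (by linarith)]; exact hp3
    linarith
  have hp0 : (p : ℝ) ≠ 0 := by positivity
  have e1 : (1 : ℝ) - 1 / p = ((p : ℝ) - 1) / p := by field_simp
  have e3 : (1 : ℝ) - 1 / (p : ℝ) ^ 3 = ((p : ℝ) ^ 3 - 1) / (p : ℝ) ^ 3 := by field_simp
  have h1' : (p : ℝ) - 1 ≠ 0 := by linarith
  have h3' : (p : ℝ) ^ 3 - 1 ≠ 0 := by linarith
  rw [fcube_apply, e1, e3, inv_div, inv_div]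
  field_simp
  ring

private lemma key_lt (p h : ℕ) (hp : 2 ≤ p) :
    (∑ k ∈ Finset.range (h + 1), (p : ℝ) ^ k) / (p : ℝ) ^ h < (1 - 1 / (p : ℝ))⁻¹ := by
  have hp1 : (1 : ℝ) < p := by exact_mod_cast hp
  have hp0 : (0 : ℝ) < p := by linarith
  have hph : (0 : ℝ) < (p : ℝ) ^ h := pow_pos hp0 h
  have hinv : (1 - 1 / (p : ℝ))⁻¹ = p / (p - 1) := by
    have : (1 : ℝ) - 1 / p = (p - 1) / p := by field_simp
    rw [this, inv_div]
  rw [geom_sum_eq (ne_of_gt hp1), hinv, div_div,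
    div_lt_div_iff₀ (mul_pos (by linarith) hph) (by linarith)]
  have h1 : (p : ℝ) ^ (h + 1) - 1 < (p : ℝ) ^ (h + 1) := by linarith
  calc ((p : ℝ) ^ (h + 1) - 1) * (p - 1)
      < (p : ℝ) ^ (h + 1) * (p - 1) := mul_lt_mul_of_pos_right h1 (by linarith)
    _ = (p : ℝ) * ((p - 1) * (p : ℝ) ^ h) := by ring

/-- If `n` is an odd perfect number with `h_p ≥ 2` for every prime `p ∣ n`, then
`16/(7·ζ(3)) < ∏_{p ∣ n} (1 + 1/p + 1/p²)`, where `ζ(3) = ∑_{k ≥ 1} 1/k³`. -/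
theorem opn_alpha_two_lower_bound (n : ℕ) (hn : Nat.Perfect n) (hodd : Odd n)
    (h2 : ∀ p ∈ n.primeFactors, 2 ≤ n.factorization p) :
    16 / (7 * ∑' k : ℕ, (1 : ℝ) / ((k : ℝ) + 1) ^ 3) <
      ∏ p ∈ n.primeFactors, (1 + 1 / (p : ℝ) + 1 / (p : ℝ) ^ 2) := by
  set Z : ℝ := ∑' k : ℕ, (1 : ℝ) / ((k : ℝ) + 1) ^ 3 with hZdef
  have hn0 : n ≠ 0 := hn.2.ne'
  -- basic facts about the zeta value
  have hZsummable : Summable (fun k : ℕ ↦ (1 : ℝ) / ((k : ℝ) + 1) ^ 3) := by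
    have h := (summable_nat_add_iff 1).2 fcube_summable
    exact h.congr fun k ↦ by rw [fcube_apply]; push_cast; ring
  have hZpos : 0 < Z :=
    Summable.tsum_pos hZsummable (fun k ↦ by positivity) 0 (by norm_num)
  have hS : (∑' m : ℕ, fcube m) = Z := by
    rw [Summable.tsum_eq_zero_add fcube_summable]
    have h0 : fcube 0 = 0 := by rw [fcube_apply]; norm_num
    rw [h0, zero_add, hZdef]
    exact tsum_congr fun k ↦ by rw [fcube_apply]; push_cast; ring
  -- splitting the sum into odd and even parts
  have hOsum : Summable ({m : ℕ | Odd m}.indicator (⇑fcube)) := fcube_summable.indicator _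
  have hEsum : Summable ({m : ℕ | Even m}.indicator (⇑fcube)) := fcube_summable.indicator _
  have hsplit : (∑' m : ℕ, {m : ℕ | Odd m}.indicator (⇑fcube) m)
      + (∑' m : ℕ, {m : ℕ | Even m}.indicator (⇑fcube) m) = ∑' m : ℕ, fcube m := by
    rw [← Summable.tsum_add hOsum hEsum]
    refine tsum_congr fun m ↦ ?_
    rcases Nat.even_or_odd m with h | h
    · rw [Set.indicator_of_notMem
          (show m ∉ {m : ℕ | Odd m} by simpa using Nat.not_odd_iff_even.mpr h),
        Set.indicator_of_mem (show m ∈ {m : ℕ | Even m} from h), zero_add]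
    · rw [Set.indicator_of_mem (show m ∈ {m : ℕ | Odd m} from h),
        Set.indicator_of_notMem
          (show m ∉ {m : ℕ | Even m} by simpa using Nat.not_even_iff_odd.mpr h), add_zero]
  have hE : (∑' m : ℕ, {m : ℕ | Even m}.indicator (⇑fcube) m) = (∑' m : ℕ, fcube m) / 8 := by
    have hinj : Function.Injective (fun k : ℕ ↦ 2 * k) := fun a b h ↦ by dsimp only at h; omega
    have hsupp : Function.support ({m : ℕ | Even m}.indicator (⇑fcube))
        ⊆ Set.range (fun k : ℕ ↦ 2 * k) := by
      intro m hm
      have hme : Even m := by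
        by_contra h
        exact hm (Set.indicator_of_notMem (show m ∉ {m : ℕ | Even m} by simpa using h) _)
      obtain ⟨k, hk⟩ := hme
      exact ⟨k, show 2 * k = m by omega⟩
    rw [← hinj.tsum_eq hsupp]
    have hval : ∀ k : ℕ, {m : ℕ | Even m}.indicator (⇑fcube) (2 * k) = fcube k / 8 := by
      intro k
      rw [Set.indicator_of_mem (show 2 * k ∈ {m : ℕ | Even m} from ⟨k, by omega⟩), fcube_apply, fcube_apply]
      push_cast
      rw [mul_pow, div_div]
      norm_num [mul_comm]
    calc (∑' k : ℕ, {m : ℕ | Even m}.indicator (⇑fcube) (2 * k))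
        = ∑' k : ℕ, fcube k / 8 := tsum_congr hval
      _ = (∑' m : ℕ, fcube m) / 8 := by rw [tsum_div_const]
  -- the Euler product over the prime factors of n
  set s : Finset ℕ := n.primeFactors with hsdef
  have hQ : ∏ p ∈ s, (1 - fcube p)⁻¹ = ∑' m : Nat.factoredNumbers s, fcube m := by
    rw [← EulerProduct.prod_filter_prime_geometric_eq_tsum_factoredNumbers fcube_summable s,
      Finset.filter_true_of_mem fun p hp ↦ Nat.prime_of_mem_primeFactors hp]
  have hQle : (∑' m : Nat.factoredNumbers s, fcube m) ≤ 7 / 8 * Z := by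
    have hsub : (Nat.factoredNumbers s : Set ℕ) ⊆ {m : ℕ | Odd m} := by
      intro m hm
      rw [Nat.mem_factoredNumbers] at hm
      obtain ⟨hm0, hms⟩ := hm
      rw [Set.mem_setOf_eq, Nat.odd_iff]
      by_contra h
      have h2m : 2 ∣ m := by omega
      have h2s : 2 ∈ s := hms 2 ((Nat.mem_primeFactorsList hm0).2 ⟨Nat.prime_two, h2m⟩)
      have h2n : 2 ∣ n := Nat.dvd_of_mem_primeFactors h2s
      have := Nat.odd_iff.mp hodd
      omega
    have hle : (∑' m : Nat.factoredNumbers s, fcube m)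
        ≤ ∑' m : ℕ, {m : ℕ | Odd m}.indicator (⇑fcube) m := by
      rw [_root_.tsum_subtype]
      exact Summable.tsum_le_tsum
        (fun m ↦ Set.indicator_le_indicator_of_subset hsub fcube_nonneg m)
        (fcube_summable.indicator _) hOsum
    have : (∑' m : ℕ, {m : ℕ | Odd m}.indicator (⇑fcube) m) = 7 / 8 * Z := by
      rw [hS] at hsplit hE
      linarith
    linarith
  -- the perfect number condition gives 2 < ∏ (1 - 1/p)⁻¹
  have hprime : ∀ p ∈ s, 2 ≤ p := fun p hp ↦ (Nat.prime_of_mem_primeFactors hp).two_le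
  have hsne : s.Nonempty := by
    rw [hsdef, Nat.nonempty_primeFactors]
    by_contra h
    push_neg at h
    interval_cases n
    · exact hn0 rfl
    · have h1 := hn.1
      simp at h1
  have h2lt : (2 : ℝ) < ∏ p ∈ s, (1 - 1 / (p : ℝ))⁻¹ := by
    have hsum : ∑ d ∈ n.divisors, d = 2 * n :=
      (Nat.perfect_iff_sum_divisors_eq_two_mul hn.2).mp hn
    have hfac : ∑ d ∈ n.divisors, d
        = ∏ p ∈ s, ∑ k ∈ Finset.range (n.factorization p + 1), p ^ k :=
      Nat.sum_divisors hn0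
    have hnprod : (∏ p ∈ s, p ^ n.factorization p) = n := by
      rw [hsdef, Nat.prod_primeFactors_prod_factorization]
      exact Nat.factorization_prod_pow_eq_self hn0
    have hnR : (0 : ℝ) < n := by exact_mod_cast hn.2
    have key : (2 : ℝ) = ∏ p ∈ s,
        (∑ k ∈ Finset.range (n.factorization p + 1), (p : ℝ) ^ k) / (p : ℝ) ^ n.factorization p := by
      rw [Finset.prod_div_distrib]
      have h1 : (∏ p ∈ s, ∑ k ∈ Finset.range (n.factorization p + 1), (p : ℝ) ^ k)
          = ((2 * n : ℕ) : ℝ) := by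
        exact_mod_cast hfac.symm.trans hsum
      have h2 : (∏ p ∈ s, ((p : ℝ) ^ n.factorization p)) = (n : ℝ) := by
        exact_mod_cast hnprod
      rw [h1, h2]
      push_cast
      field_simp
    rw [key]
    refine Finset.prod_lt_prod_of_nonempty (fun p hp ↦ ?_) (fun p hp ↦ ?_) hsne
    · have hp2 : (2 : ℝ) ≤ p := by exact_mod_cast hprime p hp
      positivity
    · exact key_lt p (n.factorization p) (hprime p hp)
  -- assemble everything
  have hPQ : ∏ p ∈ s, (1 - 1 / (p : ℝ))⁻¹
      = (∏ p ∈ s, (1 + 1 / (p : ℝ) + 1 / (p : ℝ) ^ 2)) * ∏ p ∈ s, (1 - fcube p)⁻¹ := by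
    rw [← Finset.prod_mul_distrib]
    exact Finset.prod_congr rfl fun p hp ↦ key_id p (hprime p hp)
  set P : ℝ := ∏ p ∈ s, (1 + 1 / (p : ℝ) + 1 / (p : ℝ) ^ 2) with hPdef
  have hPpos : 0 < P := by
    refine Finset.prod_pos fun p hp ↦ ?_
    have hp2 : (2 : ℝ) ≤ p := by exact_mod_cast hprime p hp
    positivity
  have hfin : (2 : ℝ) < P * (7 / 8 * Z) := by
    have hQ' : (∏ p ∈ s, (1 - fcube p)⁻¹) ≤ 7 / 8 * Z := hQ ▸ hQle
    calc (2 : ℝ) < P * ∏ p ∈ s, (1 - fcube p)⁻¹ := by rw [← hPQ]; exact h2lt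
      _ ≤ P * (7 / 8 * Z) := by
          exact mul_le_mul_of_nonneg_left hQ' (le_of_lt hPpos)
  rw [div_lt_iff₀ (by positivity)]
  nlinarith [hfin]
end

section
/- Let n be an odd perfect number, let q be a prime dividing n with h_q = 1, and suppose h_p ≥ 2 for every other prime p dividing n, where h_p is the exponent of p in the prime factorisation of n. Then 16·q³ / (7·ζ(3)·(q³ − 1)) < (1 + 1/q) · ∏_{p | n, p ≠ q} (1 + 1/p + 1/p²), where the product runs over the distinct prime factors p of n other than q. -/
open Finset

/-- The completely multiplicative function `n ↦ (n³)⁻¹` on `ℕ`. -/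
noncomputable def opnF3 : ℕ →* ℝ where
  toFun := fun n => ((n : ℝ) ^ 3)⁻¹
  map_one' := by norm_num
  map_mul' := fun m k => by push_cast; rw [mul_pow, mul_inv]

lemma opnF3_apply (n : ℕ) : opnF3 n = ((n : ℝ) ^ 3)⁻¹ := rfl

lemma opnF3_summable : Summable (fun n : ℕ => opnF3 n) := by
  simpa [opnF3_apply] using Real.summable_nat_pow_inv.mpr (by norm_num : 1 < 3)

lemma opnF3_nonneg (n : ℕ) : 0 ≤ opnF3 n := by
  rw [opnF3_apply]; positivity

/-- The sieve bound: for a finite set of primes `t`,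
`∏_{p∈t} (1 - p⁻³)⁻¹ < ζ(3)`. -/
lemma opn_sieve (t : Finset ℕ) (ht : ∀ p ∈ t, p.Prime) :
    ∏ p ∈ t, (1 - ((p : ℝ) ^ 3)⁻¹)⁻¹ < ∑' n : ℕ, opnF3 n := by
  have key := EulerProduct.prod_filter_prime_geometric_eq_tsum_factoredNumbers
    opnF3_summable t
  rw [Finset.filter_true_of_mem ht] at key
  have h1 : ∏ p ∈ t, (1 - ((p : ℝ) ^ 3)⁻¹)⁻¹ = ∏ p ∈ t, (1 - opnF3 p)⁻¹ := by
    simp [opnF3_apply]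
  rw [h1, key, tsum_subtype (Nat.factoredNumbers t) (fun m => opnF3 m)]
  -- pick a prime not in `t`
  obtain ⟨r, hrle, hr⟩ := Nat.exists_infinite_primes (t.sup id + 1)
  have hrt : r ∉ t := fun h => by
    have : r ≤ t.sup id := Finset.le_sup (f := id) h
    omega
  have hrmem : r ∉ Nat.factoredNumbers t := by
    intro h
    exact hrt ((Nat.mem_factoredNumbers.mp h).2 r
      (by simp [Nat.primeFactorsList_prime hr]))
  refine Summable.tsum_lt_tsum (i := r) (f := (Nat.factoredNumbers t).indicator (fun m => opnF3 m))
    (g := fun m => opnF3 m) (fun b => ?_) ?_ ?_ opnF3_summable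
  · by_cases hb : b ∈ Nat.factoredNumbers t
    · rw [Set.indicator_of_mem hb]
    · rw [Set.indicator_of_notMem hb]; exact opnF3_nonneg b
  · rw [Set.indicator_of_notMem hrmem]
    show (0:ℝ) < opnF3 r
    rw [opnF3_apply]
    have : (0:ℝ) < (r : ℝ) := by exact_mod_cast hr.pos
    positivity
  · exact opnF3_summable.indicator _

/-- Each factor `σ(p^e)/p^e` is at most `(1+1/p+1/p²)·(1-p⁻³)⁻¹ = 1/(1-1/p)`. -/
lemma opn_factor_le (p : ℕ) (hp : 2 ≤ p) (e : ℕ) :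
    (∑ k ∈ range (e + 1), (p : ℝ) ^ k) / (p : ℝ) ^ e ≤
      (1 + 1 / (p : ℝ) + 1 / (p : ℝ) ^ 2) * (1 - ((p : ℝ) ^ 3)⁻¹)⁻¹ := by
  have hp1 : (1 : ℝ) < (p : ℝ) := by exact_mod_cast hp.trans_lt' one_lt_two
  have hp0 : (0 : ℝ) < (p : ℝ) := lt_trans one_pos hp1
  have hpm1 : (0 : ℝ) < (p : ℝ) - 1 := by linarith
  have hcube : (1:ℝ) < (p : ℝ) ^ 3 := one_lt_pow₀ hp1 (by norm_num)
  have h31 : (0:ℝ) < (p : ℝ) ^ 3 - 1 := by linarith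
  have hRHS : (1 + 1 / (p : ℝ) + 1 / (p : ℝ) ^ 2) * (1 - ((p : ℝ) ^ 3)⁻¹)⁻¹
      = (p : ℝ) / ((p : ℝ) - 1) := by
    have e : (1 : ℝ) - ((p : ℝ) ^ 3)⁻¹ = ((p : ℝ) ^ 3 - 1) / (p : ℝ) ^ 3 := by
      field_simp
    rw [e, inv_div, ← mul_div_assoc, div_eq_div_iff h31.ne' hpm1.ne']
    field_simp
    ring
  rw [hRHS, geom_sum_eq (by linarith : (p : ℝ) ≠ 1), div_div,
    div_le_div_iff₀ (by positivity) hpm1]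
  have hpe : (0 : ℝ) < (p : ℝ) ^ e := by positivity
  have : (p : ℝ) ^ (e + 1) = (p : ℝ) ^ e * (p : ℝ) := by ring
  nlinarith [hpe, hpm1]

/-- Final algebraic step. -/
lemma opn_final {Z B C Q : ℝ} (hQ : (1:ℝ) < Q) (hB : 0 < B) (hZ : 0 < Z)
    (h1 : 2 * B ≤ C) (h2 : (8 / 7 : ℝ) * ((1 - Q⁻¹)⁻¹ * B⁻¹) < Z) :
    16 * Q / (7 * Z * (Q - 1)) < C := by
  have hQ0 : (0:ℝ) < Q := by linarith
  have hQ1 : (0:ℝ) < Q - 1 := by linarith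
  have e2 : (1 - Q⁻¹)⁻¹ = Q / (Q - 1) := by
    rw [show (1:ℝ) - Q⁻¹ = (Q - 1) / Q by field_simp, inv_div]
  rw [e2] at h2
  have e3 : (8 / 7 : ℝ) * (Q / (Q - 1) * B⁻¹) = 8 * Q / (7 * ((Q - 1) * B)) := by
    field_simp
  rw [e3, div_lt_iff₀ (by positivity)] at h2
  rw [div_lt_iff₀ (by positivity)]
  have h4 : 2 * B * (7 * Z * (Q - 1)) ≤ C * (7 * Z * (Q - 1)) :=
    mul_le_mul_of_nonneg_right h1 (by positivity)
  nlinarith [h2, h4]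

/-- If `n` is an odd perfect number, `q` a prime dividing `n` with `h_q = 1`, and
`h_p ≥ 2` for every other prime `p ∣ n`, then
`16·q³/(7·ζ(3)·(q³ − 1)) < (1 + 1/q) · ∏_{p ∣ n, p ≠ q} (1 + 1/p + 1/p²)`,
where `ζ(3) = ∑_{k ≥ 1} 1/k³`. -/
theorem opn_case_one_lower_bound (n q : ℕ) (hn : Nat.Perfect n) (hodd : Odd n)
    (hq : q.Prime) (hqn : q ∣ n) (hq1 : n.factorization q = 1)
    (h2 : ∀ p ∈ n.primeFactors, p ≠ q → 2 ≤ n.factorization p) :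
    16 * (q : ℝ) ^ 3 /
        (7 * (∑' k : ℕ, (1 : ℝ) / ((k : ℝ) + 1) ^ 3) * ((q : ℝ) ^ 3 - 1)) <
      (1 + 1 / (q : ℝ)) *
        ∏ p ∈ n.primeFactors.erase q, (1 + 1 / (p : ℝ) + 1 / (p : ℝ) ^ 2) := by
  have hn0 : 0 < n := hn.2
  have hn0' : n ≠ 0 := hn0.ne'
  set s : Finset ℕ := n.primeFactors with hs
  have hqs : q ∈ s := Nat.mem_primeFactors.mpr ⟨hq, hqn, hn0'⟩
  set P : Finset ℕ := s.erase q with hP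
  have hPprime : ∀ p ∈ P, p.Prime := fun p hp =>
    Nat.prime_of_mem_primeFactors (Finset.mem_of_mem_erase hp)
  have hsprime : ∀ p ∈ s, p.Prime := fun p hp => Nat.prime_of_mem_primeFactors hp
  -- `Z` is ζ(3)
  set Z : ℝ := ∑' k : ℕ, (1 : ℝ) / ((k : ℝ) + 1) ^ 3 with hZdef
  have hZ : Z = ∑' m : ℕ, opnF3 m := by
    rw [Summable.tsum_eq_zero_add opnF3_summable]
    simp only [opnF3_apply]
    rw [hZdef]
    push_cast
    norm_num
  -- the perfect-number identity
  have hsig : ∑ d ∈ n.divisors, d = 2 * n :=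
    (Nat.perfect_iff_sum_divisors_eq_two_mul hn0).mp hn
  have hfac : ∏ p ∈ s, ∑ k ∈ range (n.factorization p + 1), p ^ k = 2 * n := by
    rw [← Nat.sum_divisors hn0']; exact hsig
  have hnprod : ∏ p ∈ s, p ^ n.factorization p = n := by
    conv_rhs => rw [← Nat.factorization_prod_pow_eq_self hn0']
    rfl
  -- cast to ℝ and divide
  have hppos : ∀ p ∈ s, (0 : ℝ) < (p : ℝ) ^ n.factorization p := by
    intro p hp
    have : 0 < p := (hsprime p hp).pos
    positivity
  have hprodpos : (0 : ℝ) < ∏ p ∈ s, (p : ℝ) ^ n.factorization p :=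
    Finset.prod_pos hppos
  have hmain : ∏ p ∈ s,
      ((∑ k ∈ range (n.factorization p + 1), (p : ℝ) ^ k) / (p : ℝ) ^ n.factorization p)
      = 2 := by
    rw [Finset.prod_div_distrib]
    rw [div_eq_iff hprodpos.ne']
    have h1 : ∏ p ∈ s, ∑ k ∈ range (n.factorization p + 1), (p : ℝ) ^ k
        = ((2 * n : ℕ) : ℝ) := by exact_mod_cast congrArg (Nat.cast (R := ℝ)) hfac
    have h2' : ∏ p ∈ s, (p : ℝ) ^ n.factorization p = (n : ℝ) := by
      exact_mod_cast congrArg (Nat.cast (R := ℝ)) hnprod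
    rw [h1, h2']; push_cast; ring
  -- split off the factor at q
  have hsplit := (Finset.mul_prod_erase s
    (fun p => (∑ k ∈ range (n.factorization p + 1), (p : ℝ) ^ k) / (p : ℝ) ^ n.factorization p)
    hqs).symm
  have hq0 : (0 : ℝ) < (q : ℝ) := by exact_mod_cast hq.pos
  have hqfac : (∑ k ∈ range (n.factorization q + 1), (q : ℝ) ^ k) / (q : ℝ) ^ n.factorization q
      = 1 + 1 / (q : ℝ) := by
    rw [hq1]
    rw [Finset.sum_range_succ, Finset.sum_range_succ, Finset.sum_range_zero]
    field_simp
    ring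
  -- step 1 : 2 ≤ (1+1/q) * ∏_P (1+1/p+1/p²)(1-p⁻³)⁻¹
  have hstep1 : (2 : ℝ) ≤ (1 + 1 / (q : ℝ)) *
      ∏ p ∈ P, ((1 + 1 / (p : ℝ) + 1 / (p : ℝ) ^ 2) * (1 - ((p : ℝ) ^ 3)⁻¹)⁻¹) := by
    rw [← hmain, hsplit, hqfac]
    refine mul_le_mul_of_nonneg_left ?_ (by positivity)
    refine Finset.prod_le_prod (fun p hp => ?_) (fun p hp => ?_)
    · have : 0 < p := (hPprime p hp).pos
      have h0 : (0:ℝ) ≤ ∑ k ∈ range (n.factorization p + 1), (p : ℝ) ^ k := by positivity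
      positivity
    · exact opn_factor_le p (hPprime p hp).two_le _
  set A : ℝ := ∏ p ∈ P, (1 + 1 / (p : ℝ) + 1 / (p : ℝ) ^ 2) with hA
  set B : ℝ := ∏ p ∈ P, (1 - ((p : ℝ) ^ 3)⁻¹) with hB
  have hBfac : ∀ p ∈ P, (0:ℝ) < 1 - ((p : ℝ) ^ 3)⁻¹ := by
    intro p hp
    have h2p : (2:ℝ) ≤ (p:ℝ) := by exact_mod_cast (hPprime p hp).two_le
    have hc : (1:ℝ) < (p:ℝ) ^ 3 := one_lt_pow₀ (by linarith) (by norm_num)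
    have : ((p:ℝ) ^ 3)⁻¹ < 1 := inv_lt_one_of_one_lt₀ hc
    linarith
  have hBpos : 0 < B := Finset.prod_pos hBfac
  have hstep1' : 2 * B ≤ (1 + 1 / (q : ℝ)) * A := by
    rw [Finset.prod_mul_distrib, ← hA, Finset.prod_inv_distrib, ← hB] at hstep1
    rw [← mul_assoc, mul_comm (1 + 1 / (q : ℝ)) A] at hstep1
    calc 2 * B ≤ (A * (1 + 1 / (q : ℝ)) * B⁻¹) * B :=
          mul_le_mul_of_nonneg_right hstep1 hBpos.le
      _ = (1 + 1 / (q : ℝ)) * A := by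
          field_simp
  -- step 2 : sieve bound with t = insert 2 s
  have h2s : (2 : ℕ) ∉ s := by
    intro h
    have : 2 ∣ n := Nat.dvd_of_mem_primeFactors h
    rw [Nat.odd_iff] at hodd
    omega
  have hsieve := opn_sieve (insert 2 s) (by
    intro p hp
    rcases Finset.mem_insert.mp hp with h | h
    · rw [h]; exact Nat.prime_two
    · exact hsprime p h)
  rw [Finset.prod_insert h2s] at hsieve
  rw [← Finset.mul_prod_erase s (fun p => (1 - ((p : ℝ) ^ 3)⁻¹)⁻¹) hqs, ← hP] at hsieve
  rw [Finset.prod_inv_distrib, ← hB, ← hZ] at hsieve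
  -- now pure algebra
  have hq2 : (2:ℝ) ≤ (q:ℝ) := by exact_mod_cast hq.two_le
  have hQ : (1:ℝ) < (q:ℝ) ^ 3 := one_lt_pow₀ (by linarith) (by norm_num)
  rw [show ((1:ℝ) - (((2:ℕ):ℝ) ^ 3)⁻¹)⁻¹ = 8 / 7 by norm_num] at hsieve
  have hZpos : (0:ℝ) < Z := by
    have h1 : (0:ℝ) < 1 - ((q:ℝ) ^ 3)⁻¹ := by
      have := inv_lt_one_of_one_lt₀ hQ
      have h0 : (0:ℝ) < ((q:ℝ) ^ 3)⁻¹ := by positivity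
      linarith
    calc (0:ℝ) < (8 / 7 : ℝ) * ((1 - ((q:ℝ) ^ 3)⁻¹)⁻¹ * B⁻¹) :=
        mul_pos (by norm_num) (mul_pos (inv_pos.mpr h1) (inv_pos.mpr hBpos))
      _ < Z := hsieve
  exact opn_final hQ hBpos hZpos hstep1' hsieve
end

section
/- Let n be an odd perfect number, let q be a prime dividing n with h_q = 1, and suppose h_p ≥ 2 for every other prime p dividing n, where h_p is the exponent of p in the prime factorisation of n. Then 16/(7·ζ(3)) < (1 + 1/q) · ∏_{p | n, p ≠ q} (1 + 1/p + 1/p²), where the product runs over the distinct prime factors p of n other than q. -/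
open Finset

private lemma cube_summable : Summable (fun m : ℕ => 1 / (m:ℝ)^3) := by
  rw [Real.summable_one_div_nat_pow]; norm_num

private lemma zeta3_shift : ∑' m : ℕ, 1/(m:ℝ)^3 = ∑' k : ℕ, (1:ℝ)/((k:ℝ)+1)^3 := by
  rw [Summable.tsum_eq_zero_add cube_summable]
  push_cast
  simp

private lemma summable_odd_cube : Summable (fun k : ℕ => 1/((2*(k:ℝ)+1))^3) := by
  have hinj2 : Function.Injective (fun k : ℕ => 2*k+1) := fun a b h => by simpa using h
  exact (cube_summable.comp_injective hinj2).congr fun k => by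
    simp only [Function.comp_apply]; push_cast; ring

private lemma odd_cube_tsum :
    ∑' k : ℕ, 1/((2*(k:ℝ)+1))^3 = (7/8) * ∑' m : ℕ, 1/(m:ℝ)^3 := by
  have hinj1 : Function.Injective (fun k : ℕ => 2*k) := fun a b h => by simpa using h
  have hinj2 : Function.Injective (fun k : ℕ => 2*k+1) := fun a b h => by simpa using h
  have he : Summable (fun k : ℕ => 1/(((2*k : ℕ)):ℝ)^3) :=
    (cube_summable.comp_injective hinj1).congr fun k => rfl
  have ho : Summable (fun k : ℕ => 1/(((2*k+1 : ℕ)):ℝ)^3) :=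
    (cube_summable.comp_injective hinj2).congr fun k => rfl
  have h := tsum_even_add_odd (f := fun m : ℕ => 1/(m:ℝ)^3) he ho
  have he2 : ∑' k : ℕ, 1/(((2*k : ℕ)):ℝ)^3 = (1/8) * ∑' m : ℕ, 1/(m:ℝ)^3 := by
    rw [← tsum_mul_left]
    congr 1; funext k; push_cast; ring
  rw [he2] at h
  have ho2 : (∑' k : ℕ, 1/(((2*k+1 : ℕ)):ℝ)^3) = ∑' k : ℕ, 1/((2*(k:ℝ)+1))^3 := by
    congr 1; funext k; push_cast; ring
  linarith [h, ho2.symm]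

private lemma sum_divisors_cube_lt {m : ℕ} (hm : m ≠ 0) (hodd : Odd m) :
    ∑ d ∈ m.divisors, 1/(d:ℝ)^3 < (7/8) * ∑' k : ℕ, 1/(k:ℝ)^3 := by
  classical
  rw [← odd_cube_tsum]
  have hodd_d : ∀ d ∈ m.divisors, 2*(d/2)+1 = d := by
    intro d hd
    have hdvd : d ∣ m := (Nat.mem_divisors.mp hd).1
    have hoddd : Odd d := by
      rcases Nat.even_or_odd d with he | ho
      · exfalso
        obtain ⟨e, he'⟩ := he.two_dvd.trans hdvd
        obtain ⟨c, hc⟩ := hodd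
        omega
      · exact ho
    obtain ⟨c, hc⟩ := hoddd
    omega
  set T := m.divisors.image (· / 2) with hT
  have hsum_eq : ∑ d ∈ m.divisors, 1/(d:ℝ)^3 = ∑ k ∈ T, 1/((2*(k:ℝ)+1))^3 := by
    rw [hT, Finset.sum_image (by
      intro a ha b hb hab
      have := hodd_d a ha; have := hodd_d b hb; simp only at hab; omega)]
    refine Finset.sum_congr rfl fun d hd => ?_
    have h1 := hodd_d d hd
    have : (2*((d/2:ℕ):ℝ)+1) = (d:ℝ) := by exact_mod_cast congrArg (Nat.cast (R := ℝ)) h1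
    rw [this]
  rw [hsum_eq]
  obtain ⟨k0, hk0⟩ := Infinite.exists_notMem_finset T
  have h2 : ∑ k ∈ insert k0 T, 1/((2*(k:ℝ)+1))^3 ≤ ∑' k : ℕ, 1/((2*(k:ℝ)+1))^3 :=
    Summable.sum_le_tsum _ (fun i _ => by positivity) summable_odd_cube
  rw [Finset.sum_insert hk0] at h2
  have h3 : (0:ℝ) < 1/((2*(k0:ℝ)+1))^3 := by positivity
  linarith

private lemma sum_divisors_cube_eq {n : ℕ} (hn : n ≠ 0) :
    ∑ d ∈ n.divisors, d^3 =
      ∏ p ∈ n.primeFactors, ∑ k ∈ Finset.range (n.factorization p + 1), p ^ (3*k) := by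
  rw [← ArithmeticFunction.sigma_apply,
    ArithmeticFunction.isMultiplicative_sigma.multiplicative_factorization _ hn]
  refine Finset.prod_congr n.support_factorization fun p h => ?_
  show ArithmeticFunction.sigma 3 (p ^ n.factorization p) = _
  rw [ArithmeticFunction.sigma_apply_prime_pow (Nat.prime_of_mem_primeFactors h)]
  exact Finset.sum_congr rfl fun k _ => by rw [mul_comm]

private lemma aux_nat (p h : ℕ) :
    (∑ k ∈ Finset.range (h+1), p^k) * p^(2*h+2) ≤
      (p^2+p+1) * ∑ j ∈ Finset.range (h+1), p^(3*j) := by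
  have hR : (p^2+p+1) * ∑ j ∈ Finset.range (h+1), p^(3*j)
      = ∑ i ∈ Finset.range (3*h+3), p^i := by
    induction h with
    | zero => simp [Finset.sum_range_succ]; ring
    | succ h ih =>
      rw [Finset.sum_range_succ, Nat.mul_add, ih]
      conv_rhs => rw [show 3*(h+1)+3 = ((3*h+3)+1+1)+1 by ring, Finset.sum_range_succ,
        Finset.sum_range_succ, Finset.sum_range_succ]
      ring
  have hL : (∑ k ∈ Finset.range (h+1), p^k) * p^(2*h+2)
      = ∑ i ∈ (Finset.range (h+1)).image (· + (2*h+2)), p^i := by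
    rw [Finset.sum_image (by intro a _ b _ hab; simp only at hab; omega), Finset.sum_mul]
    exact Finset.sum_congr rfl fun k _ => (pow_add p k (2*h+2)).symm
  rw [hL, hR]
  apply Finset.sum_le_sum_of_subset
  intro i hi
  simp only [Finset.mem_image, Finset.mem_range] at hi ⊢
  omega

private lemma per_prime {p : ℕ} (hp : 1 ≤ p) (h : ℕ) :
    (∑ k ∈ Finset.range (h+1), (p:ℝ)^k) / (p:ℝ)^h ≤
      (1 + 1/(p:ℝ) + 1/(p:ℝ)^2) *
        ((∑ j ∈ Finset.range (h+1), (p:ℝ)^(3*j)) / ((p:ℝ)^h)^3) := by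
  have hp' : (0:ℝ) < p := by exact_mod_cast hp
  have key : (∑ k ∈ Finset.range (h+1), (p:ℝ)^k) * (p:ℝ)^(2*h+2) ≤
      ((p:ℝ)^2+(p:ℝ)+1) * ∑ j ∈ Finset.range (h+1), (p:ℝ)^(3*j) := by
    exact_mod_cast aux_nat p h
  have e1 : (∑ k ∈ Finset.range (h+1), (p:ℝ)^k) / (p:ℝ)^h
      = ((∑ k ∈ Finset.range (h+1), (p:ℝ)^k) * (p:ℝ)^(2*h+2)) / (p:ℝ)^(3*h+2) := by
    rw [div_eq_div_iff (by positivity) (by positivity)]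
    ring
  have e2 : (1 + 1/(p:ℝ) + 1/(p:ℝ)^2) *
        ((∑ j ∈ Finset.range (h+1), (p:ℝ)^(3*j)) / ((p:ℝ)^h)^3)
      = (((p:ℝ)^2+(p:ℝ)+1) * ∑ j ∈ Finset.range (h+1), (p:ℝ)^(3*j)) / (p:ℝ)^(3*h+2) := by
    field_simp
    ring
  rw [e1, e2]
  gcongr

/-- If `n` is an odd perfect number, `q` a prime dividing `n` with `h_q = 1`, and
`h_p ≥ 2` for every other prime `p ∣ n`, then
`16/(7·ζ(3)) < (1 + 1/q) · ∏_{p ∣ n, p ≠ q} (1 + 1/p + 1/p²)`,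
where `ζ(3) = ∑_{k ≥ 1} 1/k³`. -/
theorem opn_case_one_weaker_lower_bound (n q : ℕ) (hn : Nat.Perfect n) (hodd : Odd n)
    (hq : q.Prime) (hqn : q ∣ n) (hq1 : n.factorization q = 1)
    (h2 : ∀ p ∈ n.primeFactors, p ≠ q → 2 ≤ n.factorization p) :
    16 / (7 * ∑' k : ℕ, (1 : ℝ) / ((k : ℝ) + 1) ^ 3) <
      (1 + 1 / (q : ℝ)) *
        ∏ p ∈ n.primeFactors.erase q, (1 + 1 / (p : ℝ) + 1 / (p : ℝ) ^ 2) := by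
  classical
  have hn0 : 0 < n := hn.2
  obtain ⟨m, hm⟩ := hqn
  have hq0 : q ≠ 0 := hq.pos.ne'
  have hm0 : m ≠ 0 := by
    rintro rfl
    rw [hm, mul_zero] at hn0
    exact absurd hn0 (lt_irrefl 0)
  have hqm : ¬ q ∣ m := by
    intro hd
    have h2q : q^2 ∣ n := by rw [hm, pow_two]; exact Nat.mul_dvd_mul_left q hd
    have := (Nat.Prime.pow_dvd_iff_le_factorization hq hn0.ne').mp h2q
    omega
  have hcop : Nat.Coprime q m := (Nat.Prime.coprime_iff_not_dvd hq).mpr hqm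
  have hE : n.primeFactors.erase q = m.primeFactors := by
    rw [hm, Nat.primeFactors_mul hq0 hm0, Nat.Prime.primeFactors hq,
      Finset.erase_union_distrib, Finset.erase_singleton, Finset.empty_union,
      Finset.erase_eq_of_notMem (fun h => hqm (Nat.dvd_of_mem_primeFactors h))]
  have hmodd : Odd m := by
    rcases Nat.even_or_odd m with he | ho
    · exact absurd hodd (by
        rw [hm]
        exact Nat.not_odd_iff_even.mpr (he.mul_left q))
    · exact ho
  -- natural number divisor-sum identity
  have hperf : ∑ d ∈ n.divisors, d = 2*n := (Nat.perfect_iff_sum_divisors_eq_two_mul hn0).mp hn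
  have hqdiv : ∑ d ∈ q.divisors, d = 1 + q := by
    rw [Nat.Prime.divisors hq, Finset.sum_pair hq.one_lt.ne]
  have hsplit : (1+q) * ∑ d ∈ m.divisors, d = 2*(q*m) := by
    have h2' := Nat.Coprime.sum_divisors_mul hcop
    rw [← hm] at h2'
    rw [← hqdiv, ← h2', hperf, hm]
  -- real setup
  have hqR : (0:ℝ) < q := by exact_mod_cast hq.pos
  have hmR : (0:ℝ) < m := by exact_mod_cast Nat.pos_of_ne_zero hm0
  set σ1 : ℕ := ∑ d ∈ m.divisors, d with hσ1
  set σ3 : ℕ := ∑ d ∈ m.divisors, d^3 with hσ3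
  have h2R : (1 + 1/(q:ℝ)) * ((σ1:ℝ)/(m:ℝ)) = 2 := by
    have hc : ((1:ℝ)+(q:ℝ)) * (σ1:ℝ) = 2*((q:ℝ)*(m:ℝ)) := by exact_mod_cast hsplit
    field_simp
    linarith
  -- product decompositions
  have hmprod : (m:ℝ) = ∏ p ∈ m.primeFactors, (p:ℝ) ^ m.factorization p := by
    have h := Nat.factorization_prod_pow_eq_self hm0
    have h' : ∏ p ∈ m.primeFactors, p ^ m.factorization p = m := by
      rw [← Nat.support_factorization]; exact h
    exact_mod_cast (congrArg (Nat.cast (R := ℝ)) h').symm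
  have key1 : (σ1:ℝ)/(m:ℝ) = ∏ p ∈ m.primeFactors,
      ((∑ k ∈ Finset.range (m.factorization p + 1), (p:ℝ)^k) / (p:ℝ)^(m.factorization p)) := by
    rw [Finset.prod_div_distrib, ← hmprod]
    congr 1
    have := Nat.sum_divisors hm0
    rw [hσ1]
    exact_mod_cast congrArg (Nat.cast (R := ℝ)) this
  have key3 : (σ3:ℝ)/(m:ℝ)^3 = ∏ p ∈ m.primeFactors,
      ((∑ j ∈ Finset.range (m.factorization p + 1), (p:ℝ)^(3*j)) / ((p:ℝ)^(m.factorization p))^3) := by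
    rw [Finset.prod_div_distrib]
    congr 1
    · have := sum_divisors_cube_eq hm0
      rw [hσ3]
      exact_mod_cast congrArg (Nat.cast (R := ℝ)) this
    · rw [Finset.prod_pow, ← hmprod]
  -- comparison
  have step : (σ1:ℝ)/(m:ℝ) ≤
      (∏ p ∈ m.primeFactors, (1 + 1/(p:ℝ) + 1/(p:ℝ)^2)) * ((σ3:ℝ)/(m:ℝ)^3) := by
    rw [key1, key3, ← Finset.prod_mul_distrib]
    apply Finset.prod_le_prod
    · intro p hp
      have hp1 : (0:ℝ) < p := by exact_mod_cast (Nat.prime_of_mem_primeFactors hp).pos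
      positivity
    · intro p hp
      exact per_prime (Nat.prime_of_mem_primeFactors hp).one_lt.le (m.factorization p)
  -- cube sum bound
  have hcube_lt : (σ3:ℝ)/(m:ℝ)^3 < (7/8) * ∑' k : ℕ, (1:ℝ)/((k:ℝ)+1)^3 := by
    have e3' : ∑ d ∈ m.divisors, (1:ℝ)/((m/d : ℕ):ℝ)^3 = ∑ d ∈ m.divisors, 1/(d:ℝ)^3 :=
      Nat.sum_div_divisors m (fun d => 1/(d:ℝ)^3)
    have e3 : (σ3:ℝ)/(m:ℝ)^3 = ∑ d ∈ m.divisors, 1/(d:ℝ)^3 := by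
      rw [hσ3, ← e3']
      push_cast
      rw [Finset.sum_div]
      refine Finset.sum_congr rfl fun d hd => ?_
      obtain ⟨hdvd, -⟩ := Nat.mem_divisors.mp hd
      have hd0 : d ≠ 0 := by
        rintro rfl
        exact hm0 (Nat.eq_zero_of_zero_dvd hdvd)
      have hdR : ((m/d : ℕ):ℝ) = (m:ℝ)/(d:ℝ) := Nat.cast_div hdvd (by exact_mod_cast hd0)
      rw [hdR, div_pow, one_div_div]
    rw [e3, ← zeta3_shift]
    exact sum_divisors_cube_lt hm0 hmodd
  -- assemble
  set z : ℝ := ∑' k : ℕ, (1:ℝ)/((k:ℝ)+1)^3 with hz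
  have hz_pos : 0 < z := by
    rw [hz, ← zeta3_shift]
    refine Summable.tsum_pos cube_summable (fun i => by positivity) 1 (by norm_num)
  set P : ℝ := ∏ p ∈ m.primeFactors, (1 + 1/(p:ℝ) + 1/(p:ℝ)^2) with hP
  have hP_pos : 0 < P := by
    rw [hP]
    apply Finset.prod_pos
    intro p hp
    have hp1 : (0:ℝ) < p := by exact_mod_cast (Nat.prime_of_mem_primeFactors hp).pos
    positivity
  have hq_pos : (0:ℝ) < 1 + 1/(q:ℝ) := by positivity
  have big : (2:ℝ) < (1 + 1/(q:ℝ)) * (P * ((7/8)*z)) := by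
    calc (2:ℝ) = (1 + 1/(q:ℝ)) * ((σ1:ℝ)/(m:ℝ)) := h2R.symm
      _ ≤ (1 + 1/(q:ℝ)) * (P * ((σ3:ℝ)/(m:ℝ)^3)) := by
          apply mul_le_mul_of_nonneg_left step hq_pos.le
      _ < (1 + 1/(q:ℝ)) * (P * ((7/8)*z)) := by
          apply mul_lt_mul_of_pos_left _ hq_pos
          exact mul_lt_mul_of_pos_left hcube_lt hP_pos
  rw [hE]
  rw [div_lt_iff₀ (by positivity)]
  nlinarith [big]
end

section
/- If n is an odd perfect number, then it is not the case that 3, 5 and 7 all divide n; equivalently, 105 does not divide n. -/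
open ArithmeticFunction Finset
open scoped ArithmeticFunction.sigma

lemma geo_div (p k : ℕ) : (1 + p) ∣ ∑ i ∈ Finset.range (2 * k), p ^ i := by
  induction k with
  | zero => simp
  | succ k ih =>
    have : 2 * (k + 1) = 2 * k + 1 + 1 := by ring
    rw [this, Finset.sum_range_succ, Finset.sum_range_succ]
    have : p ^ (2 * k) + p ^ (2 * k + 1) = p ^ (2 * k) * (1 + p) := by ring
    rw [add_assoc, this]
    exact dvd_add ih (Dvd.intro_left _ rfl)

lemma sigma_mono {m n : ℕ} (hm : m ∣ n) (hn : 0 < n) : σ 1 m * (n / m) ≤ σ 1 n := by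
  obtain ⟨c, rfl⟩ := hm
  have hm0 : 0 < m := Nat.pos_of_ne_zero (by rintro rfl; simp at hn)
  have hc0 : 0 < c := Nat.pos_of_ne_zero (by rintro rfl; simp at hn)
  rw [Nat.mul_div_cancel_left _ hm0]
  have hinj : ∀ x ∈ m.divisors, ∀ y ∈ m.divisors, x * c = y * c → x = y := by
    intro x _ y _ h
    exact Nat.eq_of_mul_eq_mul_right hc0 h
  have hsub : m.divisors.image (· * c) ⊆ (m * c).divisors := by
    intro x hx
    simp only [Finset.mem_image] at hx
    obtain ⟨d, hd, rfl⟩ := hx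
    rw [Nat.mem_divisors] at hd ⊢
    exact ⟨mul_dvd_mul hd.1 dvd_rfl, by positivity⟩
  calc σ 1 m * c = ∑ d ∈ m.divisors, d * c := by rw [sigma_one_apply, Finset.sum_mul]
    _ = ∑ x ∈ m.divisors.image (· * c), x := by rw [Finset.sum_image hinj]
    _ ≤ ∑ x ∈ (m * c).divisors, x := Finset.sum_le_sum_of_subset hsub
    _ = σ 1 (m * c) := (sigma_one_apply _).symm

lemma sq_dvd_of_mod4 {p n : ℕ} (hp : p.Prime) (hp4 : p % 4 = 3) (hodd : Odd n)
    (hσ : σ 1 n = 2 * n) (hdvd : p ∣ n) : p ^ 2 ∣ n := by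
  have hn0 : n ≠ 0 := by rintro rfl; simp [Nat.odd_iff] at hodd
  set a := n.factorization p with ha
  have ha1 : 1 ≤ a := (hp.factorization_pos_of_dvd hn0 hdvd)
  rcases Nat.even_or_odd a with he | ho
  · obtain ⟨t, ht⟩ := he
    have h2 : 2 ≤ a := by omega
    calc p ^ 2 ∣ p ^ a := pow_dvd_pow p h2
      _ ∣ n := Nat.ordProj_dvd n p
  · exfalso
    obtain ⟨k, hk⟩ := ho
    have hmul : σ 1 n = σ 1 (p ^ a) * σ 1 (n / p ^ a) := by
      conv_lhs => rw [← Nat.ordProj_mul_ordCompl_eq_self n p]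
      exact isMultiplicative_sigma.map_mul_of_coprime ((Nat.coprime_ordCompl hp hn0).pow_left _)
    have hdvd4 : 4 ∣ σ 1 (p ^ a) := by
      rw [sigma_one_apply_prime_pow hp, hk]
      have : 2 * k + 1 + 1 = 2 * (k + 1) := by ring
      rw [this]
      have h4 : (4 : ℕ) ∣ 1 + p := by omega
      exact h4.trans (geo_div p (k + 1))
    have : 4 ∣ 2 * n := by rw [← hσ, hmul]; exact hdvd4.mul_right _
    have : 2 ∣ n := by omega
    rw [Nat.odd_iff] at hodd
    omega

/-- An odd perfect number is not divisible by all three of 3, 5 and 7; equivalently,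
`105` does not divide it. -/
theorem opn_not_div_105 (n : ℕ) (hn : Nat.Perfect n) (hodd : Odd n) :
    ¬(3 ∣ n ∧ 5 ∣ n ∧ 7 ∣ n) := by
  rintro ⟨h3, h5, h7⟩
  have hn0 : 0 < n := hn.2
  have hσ : σ 1 n = 2 * n := by
    rw [sigma_one_apply]
    exact (Nat.perfect_iff_sum_divisors_eq_two_mul hn0).mp hn
  have h9 : 9 ∣ n := by
    have := sq_dvd_of_mod4 (by norm_num : Nat.Prime 3) (by norm_num) hodd hσ h3
    simpa using this
  have h49 : 49 ∣ n := by
    have := sq_dvd_of_mod4 (by norm_num : Nat.Prime 7) (by norm_num) hodd hσ h7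
    simpa using this
  have h45 : 45 ∣ n := (Nat.Coprime.mul_dvd_of_dvd_of_dvd (by norm_num) h9 h5)
  have h2205 : 2205 ∣ n := by
    have := Nat.Coprime.mul_dvd_of_dvd_of_dvd (show Nat.Coprime 45 49 by norm_num) h45 h49
    simpa using this
  have hval : σ 1 2205 = 4446 := by
    have h1 : (2205 : ℕ) = (3 ^ 2 * 5 ^ 1) * 7 ^ 2 := by norm_num
    rw [h1, isMultiplicative_sigma.map_mul_of_coprime (by norm_num),
      isMultiplicative_sigma.map_mul_of_coprime (by norm_num),
      sigma_one_apply_prime_pow (by norm_num), sigma_one_apply_prime_pow (by norm_num),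
      sigma_one_apply_prime_pow (by norm_num)]
    simp [Finset.sum_range_succ]
  have hle := sigma_mono h2205 hn0
  rw [hval, hσ] at hle
  have hq : n / 2205 * 2205 = n := Nat.div_mul_cancel h2205
  clear hval hσ hn hodd h3 h5 h7 h9 h49 h45 h2205
  omega
end

section
/- Let n be an odd perfect number with exactly m distinct prime factors, and suppose the smallest prime factor of n is the r-th prime p_r (where p_1 = 2, p_2 = 3, p_3 = 5, ...). Then ∏_{j=r}^{r+m-1} (1 + 1/p_j) > 16/π². -/
open Real

lemma hasSum_odd_inv_sq :
    HasSum (fun k : ℕ => if Odd k then ((k : ℝ) ^ 2)⁻¹ else 0) (π ^ 2 / 8) := by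
  have hall : HasSum (fun n : ℕ => ((n : ℝ) ^ 2)⁻¹) (π ^ 2 / 6) := by
    simpa [one_div] using hasSum_zeta_two
  set gE : ℕ → ℝ := fun k => if Even k then ((k : ℝ) ^ 2)⁻¹ else 0 with hgE
  have heven : HasSum gE (π ^ 2 / 24) := by
    have hinj : Function.Injective (fun n : ℕ => 2 * n) := fun a b h => by simpa using h
    have h0 : ∀ c ∉ Set.range (fun n : ℕ => 2 * n), gE c = 0 := by
      intro c hc
      have hco : ¬ Even c := by
        intro ⟨t, ht⟩
        exact hc ⟨t, by simp; omega⟩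
      simp [hgE, hco]
    have hcomp : HasSum (gE ∘ fun n : ℕ => 2 * n) (π ^ 2 / 24) := by
      have h4 : HasSum (fun n : ℕ => (4 : ℝ)⁻¹ * ((n : ℝ) ^ 2)⁻¹) (4⁻¹ * (π ^ 2 / 6)) :=
        hall.mul_left _
      have : (gE ∘ fun n : ℕ => 2 * n) = fun n : ℕ => (4 : ℝ)⁻¹ * ((n : ℝ) ^ 2)⁻¹ := by
        funext n
        have he : Even (2 * n) := ⟨n, by ring⟩
        simp only [Function.comp, hgE, he, if_pos]
        push_cast
        ring
      rw [this]
      convert h4 using 1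
      ring
    exact (hinj.hasSum_iff h0).mp hcomp
  have hsub := hall.sub heven
  have heq : (fun k : ℕ => ((k:ℝ)^2)⁻¹ - gE k)
      = fun k : ℕ => if Odd k then ((k : ℝ) ^ 2)⁻¹ else 0 := by
    funext k
    rcases Nat.even_or_odd k with h | h
    · simp [hgE, h, Nat.not_odd_iff_even.mpr h]
    · simp [hgE, h, Nat.not_even_iff_odd.mpr h]
  rw [heq] at hsub
  convert hsub using 1
  case e'_3 => rfl
  ring

noncomputable def invSqHom : ℕ →* ℝ where
  toFun n := ((n : ℝ) ^ 2)⁻¹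
  map_one' := by norm_num
  map_mul' m n := by push_cast; rw [mul_pow, mul_inv]

lemma summable_invSq : Summable (fun n : ℕ => ((n : ℝ) ^ 2)⁻¹) := by
  simpa [one_div] using Real.summable_one_div_nat_pow.mpr (by norm_num : 1 < 2)

lemma prod_inv_one_sub_inv_sq_le (S : Finset ℕ) (hP : ∀ p ∈ S, p.Prime)
    (h2 : 2 ∉ S) :
    ∏ p ∈ S, (1 - ((p : ℝ) ^ 2)⁻¹)⁻¹ ≤ π ^ 2 / 8 := by
  have hfilter : Finset.filter (fun p => Nat.Prime p) S = S :=
    Finset.filter_true_of_mem hP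
  have key := EulerProduct.prod_filter_prime_geometric_eq_tsum_factoredNumbers
    (f := invSqHom) summable_invSq S
  rw [hfilter] at key
  have : ∏ p ∈ S, (1 - ((p : ℝ) ^ 2)⁻¹)⁻¹ = ∑' m : Nat.factoredNumbers S, invSqHom m := by
    rw [← key]; rfl
  rw [this]
  rw [← hasSum_odd_inv_sq.tsum_eq]
  apply Summable.tsum_le_tsum_of_inj (fun m : Nat.factoredNumbers S => (m : ℕ))
  · exact Subtype.val_injective
  · intro c _; positivity
  · rintro ⟨m, hm⟩
    rw [Nat.mem_factoredNumbers] at hm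
    have hodd : Odd m := by
      rcases Nat.even_or_odd m with he | ho
      · exfalso
        have h2m : 2 ∈ m.primeFactorsList := by
          apply (Nat.mem_primeFactorsList hm.1).mpr
          exact ⟨Nat.prime_two, he.two_dvd⟩
        exact h2 (hm.2 2 h2m)
      · exact ho
    simp [invSqHom, hodd]
  · exact summable_invSq.subtype _
  · exact hasSum_odd_inv_sq.summable

lemma two_lt_prod_ratio (n : ℕ) (hn : Nat.Perfect n) :
    (2 : ℝ) < ∏ p ∈ n.primeFactors, (p : ℝ) / ((p : ℝ) - 1) := by
  have hn0 : 0 < n := hn.2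
  have hn1 : 1 < n := by
    rcases Nat.lt_or_ge n 2 with h | h
    · have hne : n = 1 := by omega
      subst hne
      exact absurd hn.1 (by simp)
    · omega
  have hσ : (ArithmeticFunction.sigma 1) n = 2 * n := by
    rw [ArithmeticFunction.sigma_one_apply]
    exact (Nat.perfect_iff_sum_divisors_eq_two_mul hn0).mp hn
  have hfac : (ArithmeticFunction.sigma 1) n =
      ∏ p ∈ n.primeFactors, (ArithmeticFunction.sigma 1) (p ^ n.factorization p) := by
    rw [ArithmeticFunction.isMultiplicative_sigma.multiplicative_factorization _ hn0.ne']
    rw [Finsupp.prod, Nat.support_factorization]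
  have hnfac : (n : ℝ) = ∏ p ∈ n.primeFactors, ((p : ℝ) ^ n.factorization p) := by
    conv_lhs => rw [← Nat.factorization_prod_pow_eq_self hn0.ne']
    rw [Finsupp.prod, Nat.support_factorization]
    push_cast
    rfl
  have h2 : (2 : ℝ) = ∏ p ∈ n.primeFactors,
      ((ArithmeticFunction.sigma 1) (p ^ n.factorization p) : ℝ) / (p : ℝ) ^ n.factorization p := by
    rw [Finset.prod_div_distrib, ← hnfac]
    rw [eq_div_iff (by positivity)]
    rw [← Nat.cast_prod, ← hfac, hσ]
    push_cast
    ring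
  rw [h2]
  apply Finset.prod_lt_prod_of_nonempty
  · intro p hp
    have hpp := Nat.prime_of_mem_primeFactors hp
    have h1 : 0 < (ArithmeticFunction.sigma 1) (p ^ n.factorization p) := by
      rw [ArithmeticFunction.sigma_one_apply_prime_pow hpp]
      exact Finset.sum_pos (fun i _ => pow_pos hpp.pos i)
        ⟨0, Finset.mem_range.mpr (Nat.succ_pos _)⟩
    have := hpp.pos
    positivity
  · intro p hp
    have hpp := Nat.prime_of_mem_primeFactors hp
    have hp2 : (2 : ℝ) ≤ (p : ℝ) := by exact_mod_cast hpp.two_le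
    set k := n.factorization p
    have hσp : ((ArithmeticFunction.sigma 1) (p ^ k) : ℝ)
        = ∑ i ∈ Finset.range (k + 1), (p : ℝ) ^ i := by
      rw [ArithmeticFunction.sigma_one_apply_prime_pow hpp]
      push_cast
      rfl
    rw [hσp, div_lt_div_iff₀ (by positivity) (by linarith)]
    rw [geom_sum_mul]
    have : (p : ℝ) * (p : ℝ) ^ k = (p : ℝ) ^ (k + 1) := by ring
    rw [this]
    linarith
  · exact Nat.nonempty_primeFactors.mpr hn1
lemma opn_prod_one_add_inv (n : ℕ) (hn : Nat.Perfect n) (hodd : Odd n) :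
    16 / π ^ 2 < ∏ p ∈ n.primeFactors, (1 + 1 / (p : ℝ)) := by
  have h2S : 2 ∉ n.primeFactors := by
    intro h
    have hdvd : 2 ∣ n := Nat.dvd_of_mem_primeFactors h
    have h1 : n % 2 = 1 := Nat.odd_iff.mp hodd
    omega
  have hsplit : ∀ p ∈ n.primeFactors,
      (p : ℝ) / ((p : ℝ) - 1) = (1 + 1 / (p : ℝ)) * (1 - ((p : ℝ) ^ 2)⁻¹)⁻¹ := by
    intro p hp
    have hpp := Nat.prime_of_mem_primeFactors hp
    have hp2 : (2 : ℝ) ≤ (p : ℝ) := by exact_mod_cast hpp.two_le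
    have h0 : (p : ℝ) ≠ 0 := by linarith
    have h1 : (p : ℝ) - 1 ≠ 0 := by linarith
    have h1' : (p : ℝ) + 1 ≠ 0 := by linarith
    have hsq : 1 - ((p : ℝ) ^ 2)⁻¹ = ((p:ℝ) - 1) * ((p:ℝ) + 1) / (p:ℝ)^2 := by
      field_simp
      ring
    rw [hsq]
    field_simp
  have hC := two_lt_prod_ratio n hn
  rw [Finset.prod_congr rfl hsplit, Finset.prod_mul_distrib] at hC
  set X := ∏ p ∈ n.primeFactors, (1 + 1 / (p : ℝ)) with hX
  set Y := ∏ p ∈ n.primeFactors, (1 - ((p : ℝ) ^ 2)⁻¹)⁻¹ with hY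
  have hXpos : 0 < X := by
    apply Finset.prod_pos
    intro p hp
    have := (Nat.prime_of_mem_primeFactors hp).pos
    positivity
  have hYle : Y ≤ π ^ 2 / 8 :=
    prod_inv_one_sub_inv_sq_le _ (fun p hp => Nat.prime_of_mem_primeFactors hp) h2S
  have h2XY : (2 : ℝ) < X * (π ^ 2 / 8) :=
    hC.trans_le (by nlinarith)
  rw [div_lt_iff₀ (by positivity : (0:ℝ) < π ^ 2)]
  nlinarith

/-- Let `n` be an odd perfect number with exactly `m` distinct prime factors whose
smallest prime factor is the `r`-th prime (1-indexed, so the 1st prime is 2). Then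
`∏_{j=r}^{r+m-1} (1 + 1/p_j) > 16/π²`. -/
theorem opn_consecutive_primes_product_gt (n m r : ℕ) (hn : Nat.Perfect n) (hodd : Odd n)
    (hm : n.primeFactors.card = m) (hr : 1 ≤ r)
    (hmin : n.minFac = Nat.nth Nat.Prime (r - 1)) :
    ∏ j ∈ Finset.Icc r (r + m - 1), (1 + 1 / (Nat.nth Nat.Prime (j - 1) : ℝ)) >
      16 / Real.pi ^ 2 := by
  classical
  have hn0 : 0 < n := hn.2
  have hn1 : 1 < n := by
    rcases Nat.lt_or_ge n 2 with h | h
    · have hne : n = 1 := by omega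
      subst hne
      exact absurd hn.1 (by simp)
    · omega
  have hSne : n.primeFactors.Nonempty := Nat.nonempty_primeFactors.mpr hn1
  have hm1 : 1 ≤ m := hm ▸ Finset.card_pos.mpr hSne
  set e := n.primeFactors.orderIsoOfFin hm with he
  -- every element of primeFactors is a prime at least minFac
  have hmem : ∀ i : Fin m, ((e i : ℕ) ∈ n.primeFactors) := fun i => (e i).2
  have hprime : ∀ i : Fin m, ((e i : ℕ)).Prime :=
    fun i => Nat.prime_of_mem_primeFactors (hmem i)
  -- counting claim
  have hcount : ∀ i : ℕ, ∀ hi : i < m, r - 1 + i ≤ Nat.count Nat.Prime (e ⟨i, hi⟩) := by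
    intro i
    induction i with
    | zero =>
      intro hi
      simp only [Nat.add_zero]
      have hq := hprime ⟨0, hi⟩
      have hle : Nat.nth Nat.Prime (r - 1) ≤ (e ⟨0, hi⟩ : ℕ) := by
        rw [← hmin]
        exact Nat.minFac_le_of_dvd hq.two_le
          (Nat.dvd_of_mem_primeFactors (hmem ⟨0, hi⟩))
      have := Nat.nth_count hq
      rw [← this] at hle
      exact (Nat.nth_le_nth Nat.infinite_setOf_prime).mp hle
    | succ i ih =>
      intro hi
      have hi' : i < m := Nat.lt_of_succ_lt hi
      have hih := ih hi'
      have hlt : (e ⟨i, hi'⟩ : ℕ) < (e ⟨i + 1, hi⟩ : ℕ) := by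
        have : (⟨i, hi'⟩ : Fin m) < ⟨i + 1, hi⟩ := by
          simp [Fin.lt_def]
        exact_mod_cast e.lt_iff_lt.mpr this
      have h1 : Nat.count Nat.Prime ((e ⟨i, hi'⟩ : ℕ) + 1)
          ≤ Nat.count Nat.Prime (e ⟨i + 1, hi⟩) :=
        Nat.count_monotone _ hlt
      rw [Nat.count_succ, if_pos (hprime ⟨i, hi'⟩)] at h1
      omega
  have hkey : ∀ i : Fin m, Nat.nth Nat.Prime (r - 1 + (i : ℕ)) ≤ (e i : ℕ) := by
    intro i
    have h1 : Nat.nth Nat.Prime (r - 1 + (i : ℕ))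
        ≤ Nat.nth Nat.Prime (Nat.count Nat.Prime (e i)) :=
      (Nat.nth_le_nth Nat.infinite_setOf_prime).mpr (by
        have := hcount i.val i.isLt
        simpa using this)
    rwa [Nat.nth_count (hprime i)] at h1
  -- reindex the Icc product
  have hIcc : Finset.Icc r (r + m - 1) =
      Finset.map ⟨fun i => r + i, add_right_injective r⟩ (Finset.range m) := by
    ext j
    simp only [Finset.mem_Icc, Finset.mem_map, Finset.mem_range, Function.Embedding.coeFn_mk]
    constructor
    · intro hj
      exact ⟨j - r, by omega, by beta_reduce; omega⟩
    · rintro ⟨i, hi, rfl⟩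
      beta_reduce
      omega
  rw [hIcc, Finset.prod_map]
  simp only [Function.Embedding.coeFn_mk]
  have hstep : ∏ i ∈ Finset.range m, (1 + 1 / (Nat.nth Nat.Prime (r + i - 1) : ℝ))
      = ∏ i : Fin m, (1 + 1 / (Nat.nth Nat.Prime (r + (i : ℕ) - 1) : ℝ)) :=
    (Fin.prod_univ_eq_prod_range _ m).symm
  rw [hstep]
  have hS : ∏ p ∈ n.primeFactors, (1 + 1 / (p : ℝ))
      = ∏ i : Fin m, (1 + 1 / ((e i : ℕ) : ℝ)) := by
    rw [← Finset.prod_coe_sort n.primeFactors (fun p => (1 + 1 / (p : ℝ)))]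
    exact (Equiv.prod_comp e.toEquiv (fun x => (1 + 1 / ((x : ℕ) : ℝ)))).symm
  have hcompare : ∏ i : Fin m, (1 + 1 / ((e i : ℕ) : ℝ))
      ≤ ∏ i : Fin m, (1 + 1 / (Nat.nth Nat.Prime (r + (i : ℕ) - 1) : ℝ)) := by
    apply Finset.prod_le_prod
    · intro i _
      have := (hprime i).pos
      positivity
    · intro i _
      have hidx : r + (i : ℕ) - 1 = r - 1 + (i : ℕ) := by omega
      rw [hidx]
      have h1 := hkey i
      have hpos : 0 < Nat.nth Nat.Prime (r - 1 + (i : ℕ)) := (Nat.prime_nth_prime _).pos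
      have : 1 / ((e i : ℕ) : ℝ) ≤ 1 / (Nat.nth Nat.Prime (r - 1 + (i : ℕ)) : ℝ) := by
        apply one_div_le_one_div_of_le
        · exact_mod_cast hpos
        · exact_mod_cast h1
      linarith
  calc 16 / Real.pi ^ 2 < ∏ p ∈ n.primeFactors, (1 + 1 / (p : ℝ)) :=
        opn_prod_one_add_inv n hn hodd
    _ = ∏ i : Fin m, (1 + 1 / ((e i : ℕ) : ℝ)) := hS
    _ ≤ _ := hcompare
end

section
/- Let n be an odd perfect number with exactly m ≥ 2 distinct prime factors, and suppose the second smallest prime factor of n is the r-th prime p_r (where p_1 = 2, p_2 = 3, p_3 = 5, ...). Then (1 + 1/3) · ∏_{j=r}^{r+m-2} (1 + 1/p_j) > 16/π². -/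
open Finset Real

private lemma euler_bound (T : Finset ℕ) (hT : ∀ p ∈ T, p.Prime) :
    ∏ p ∈ T, (1 - 1 / (p : ℝ) ^ 2)⁻¹ < π ^ 2 / 6 := by
  set f : ℕ → ℝ := fun n => 1 / (n : ℝ) ^ 2 with hf
  have hf1 : f 1 = 1 := by simp [hf]
  have hmul : ∀ {m k : ℕ}, Nat.Coprime m k → f (m * k) = f m * f k := by
    intro m k _
    simp only [hf, Nat.cast_mul]
    rw [mul_pow]
    rw [one_div, one_div, one_div, mul_inv]
  have hsum : Summable f := hasSum_zeta_two.summable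
  have hnn : ∀ k, 0 ≤ f k := fun k => by positivity
  have hnorm : Summable (‖f ·‖) := by
    simpa [Real.norm_eq_abs, abs_of_nonneg (hnn _)] using hsum
  have key := EulerProduct.prod_filter_prime_tsum_eq_tsum_factoredNumbers hf1 hmul hnorm T
  rw [Finset.filter_true_of_mem hT] at key
  have hterm : ∀ p ∈ T, (∑' n : ℕ, f (p ^ n)) = (1 - 1 / (p : ℝ) ^ 2)⁻¹ := by
    intro p hp
    have hp2 : (2 : ℝ) ≤ (p : ℝ) := by exact_mod_cast (hT p hp).two_le
    have h0 : (0:ℝ) ≤ 1 / (p:ℝ)^2 := by positivity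
    have h1 : 1 / (p:ℝ)^2 < 1 := by
      rw [div_lt_one (by positivity)]
      nlinarith
    have := tsum_geometric_of_lt_one h0 h1
    rw [← this]
    congr 1
    ext n
    simp only [hf]
    push_cast
    rw [div_pow, one_pow, ← pow_mul, ← pow_mul, Nat.mul_comm]
  rw [Finset.prod_congr rfl hterm] at key
  rw [key]
  -- strict inequality: tsum over factored numbers < full tsum
  obtain ⟨q, hq, hqT⟩ := Nat.infinite_setOf_prime.exists_notMem_finset T
  have hqF : q ∉ Nat.factoredNumbers T := by
    intro hmem
    rw [Nat.mem_factoredNumbers] at hmem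
    exact hqT (hmem.2 q ((Nat.mem_primeFactorsList hq.pos.ne').mpr ⟨hq, dvd_rfl⟩))
  have hind : ∀ k, Set.indicator (Nat.factoredNumbers T) f k ≤ f k := fun k =>
    Set.indicator_le_self' (fun k _ => hnn k) k
  have hstrict : Set.indicator (Nat.factoredNumbers T) f q < f q := by
    rw [Set.indicator_of_notMem hqF]
    have hq0 : (0:ℝ) < (q:ℝ) := by exact_mod_cast hq.pos
    simp only [hf]
    positivity
  calc (∑' m : Nat.factoredNumbers T, f m)
      = ∑' k : ℕ, Set.indicator (Nat.factoredNumbers T) f k := tsum_subtype _ _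
    _ < ∑' k : ℕ, f k := Summable.tsum_lt_tsum hind hstrict (hsum.indicator _) hsum
    _ = π ^ 2 / 6 := hasSum_zeta_two.tsum_eq

private lemma euler_bound' (T : Finset ℕ) (hT : ∀ p ∈ T, p.Prime) :
    6 / π ^ 2 < ∏ p ∈ T, (1 - 1 / (p : ℝ) ^ 2) := by
  have hpos : ∀ p ∈ T, (0:ℝ) < 1 - 1 / (p:ℝ)^2 := by
    intro p hp
    have h2 : (2:ℝ) ≤ (p:ℝ) := by exact_mod_cast (hT p hp).two_le
    have : 1 / (p:ℝ)^2 < 1 := by rw [div_lt_one (by positivity)]; nlinarith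
    linarith
  have hP : (0:ℝ) < ∏ p ∈ T, (1 - 1 / (p:ℝ)^2) := Finset.prod_pos hpos
  have h := euler_bound T hT
  rw [Finset.prod_inv_distrib] at h
  have := inv_strictAnti₀ (by positivity) h
  rwa [inv_inv, ← one_div, div_div_eq_mul_div, one_mul] at this

private lemma opn_prod (n : ℕ) (hn : Nat.Perfect n) (hodd : Odd n)
    (hne : n.primeFactors.Nonempty) :
    16 / π ^ 2 < ∏ p ∈ n.primeFactors, (1 + 1 / (p : ℝ)) := by
  have hn0 : 0 < n := hn.2
  have hσ : ∑ d ∈ n.divisors, d = 2 * n := (Nat.perfect_iff_sum_divisors_eq_two_mul hn0).mp hn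
  rw [Nat.sum_divisors hn0.ne'] at hσ
  have hfac : ∏ p ∈ n.primeFactors, p ^ n.factorization p = n := by
    conv_rhs => rw [← Nat.factorization_prod_pow_eq_self hn0.ne']
    rw [Finsupp.prod, Nat.support_factorization]
  set S := n.primeFactors with hS
  have hprime : ∀ p ∈ S, p.Prime := fun p hp => Nat.prime_of_mem_primeFactors hp
  -- cast to ℝ
  have hR : ∏ p ∈ S, (∑ k ∈ Finset.range (n.factorization p + 1), (p:ℝ)^k) = 2 * (n:ℝ) := by
    exact_mod_cast congrArg (Nat.cast : ℕ → ℝ) hσ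
  have hfacR : ∏ p ∈ S, ((p:ℝ)) ^ n.factorization p = (n:ℝ) := by
    exact_mod_cast congrArg (Nat.cast : ℕ → ℝ) hfac
  -- pointwise strict bound
  have hb : ∀ p ∈ S, (∑ k ∈ Finset.range (n.factorization p + 1), (p:ℝ)^k) <
      (1 + 1/(p:ℝ)) * ((1 - 1/(p:ℝ)^2)⁻¹ * (p:ℝ) ^ n.factorization p) := by
    intro p hp
    have hx : (2:ℝ) ≤ (p:ℝ) := by exact_mod_cast (hprime p hp).two_le
    set x := (p:ℝ)
    have hx0 : (0:ℝ) < x := by linarith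
    have hx1 : x ≠ 1 := by linarith
    set a := n.factorization p
    rw [geom_sum_eq hx1]
    have hxa : (0:ℝ) < x ^ a := by positivity
    have hd : (0:ℝ) < x - 1 := by linarith
    have heq : (1 + 1/x) * ((1 - 1/x^2)⁻¹ * x ^ a) = x ^ (a+1) / (x - 1) := by
      have h2 : (1 - 1/x^2) ≠ 0 := by
        have : 1/x^2 < 1 := by rw [div_lt_one (by positivity)]; nlinarith
        linarith
      have h3 : x - 1 ≠ 0 := by linarith
      have h4 : x ^ 2 - 1 ≠ 0 := by nlinarith
      have e1 : (1 - 1/x^2)⁻¹ = x^2/(x^2-1) := by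
        rw [inv_eq_iff_eq_inv, inv_div]
        field_simp
      rw [e1, eq_div_iff h3]
      field_simp
      ring
    rw [heq, pow_succ]
    gcongr
    linarith
  have hposs : ∀ p ∈ S, (0:ℝ) < ∑ k ∈ Finset.range (n.factorization p + 1), (p:ℝ)^k := by
    intro p hp
    have hx0 : (0:ℝ) < (p:ℝ) := by exact_mod_cast (hprime p hp).pos
    exact Finset.sum_pos (fun k _ => by positivity) ⟨0, Finset.mem_range.mpr (Nat.succ_pos _)⟩
  have hlt := Finset.prod_lt_prod_of_nonempty hposs hb hne
  rw [hR, Finset.prod_mul_distrib, Finset.prod_mul_distrib, Finset.prod_inv_distrib, hfacR] at hlt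
  set A := ∏ p ∈ S, (1 + 1/(p:ℝ)) with hA
  set B := ∏ p ∈ S, (1 - 1/(p:ℝ)^2) with hB
  have hBpos : (0:ℝ) < B := by
    apply Finset.prod_pos
    intro p hp
    have h2 : (2:ℝ) ≤ (p:ℝ) := by exact_mod_cast (hprime p hp).two_le
    have : 1 / (p:ℝ)^2 < 1 := by rw [div_lt_one (by positivity)]; nlinarith
    linarith
  have hnR : (0:ℝ) < (n:ℝ) := by exact_mod_cast hn0
  have h2AB : 2 < A * B⁻¹ := by
    have := (mul_lt_mul_iff_of_pos_right hnR).mp (by linarith [hlt] : 2 * (n:ℝ) < (A * B⁻¹) * (n:ℝ))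
    linarith
  have hAB : 2 * B < A := by
    have := (mul_lt_mul_iff_of_pos_right hBpos).mpr h2AB
    rwa [mul_assoc, inv_mul_cancel₀ hBpos.ne', mul_one] at this
  -- lower bound on B
  have h2S : 2 ∉ S := by
    intro h2
    have := Nat.dvd_of_mem_primeFactors h2
    rw [Nat.odd_iff] at hodd
    omega
  have hT : ∀ p ∈ insert 2 S, p.Prime := by
    intro p hp
    rcases Finset.mem_insert.mp hp with h | h
    · rw [h]; exact Nat.prime_two
    · exact hprime p h
  have hTB := euler_bound' (insert 2 S) hT
  rw [Finset.prod_insert h2S] at hTB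
  have h34 : (1 - 1/((2:ℕ):ℝ)^2) = 3/4 := by norm_num
  rw [h34, ← hB] at hTB
  have hkey : (16:ℝ)/π^2 = (8/3) * (6/π^2) := by ring
  rw [hA] at *
  linarith

/-- Let `n` be an odd perfect number with exactly `m ≥ 2` distinct prime factors whose
second smallest prime factor is the `r`-th prime (1-indexed, so the 1st prime is 2). Then
`(1 + 1/3) · ∏_{j=r}^{r+m-2} (1 + 1/p_j) > 16/π²`. -/
theorem opn_second_prime_product_gt (n m r : ℕ) (hn : Nat.Perfect n) (hodd : Odd n)
    (hm : n.primeFactors.card = m) (hm2 : 2 ≤ m) (hr : 1 ≤ r)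
    (hsecond : (Finset.sort n.primeFactors (· ≤ ·))[1]! = Nat.nth Nat.Prime (r - 1)) :
    (1 + 1 / 3 : ℝ) *
        ∏ j ∈ Finset.Icc r (r + m - 2), (1 + 1 / (Nat.nth Nat.Prime (j - 1) : ℝ)) >
      16 / Real.pi ^ 2 := by
  set S := n.primeFactors with hSdef
  have hne : S.Nonempty := Finset.card_pos.mp (hm ▸ by omega)
  have hprime : ∀ p ∈ S, p.Prime := fun p hp => Nat.prime_of_mem_primeFactors hp
  set e := S.orderEmbOfFin hm with he
  have heP : ∀ i : Fin m, (e i).Prime := fun i => hprime _ (Finset.orderEmbOfFin_mem S hm i)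
  have h1m : 1 < m := hm2
  -- translate hsecond
  have hlen : 1 < (Finset.sort S (· ≤ ·)).length := by
    rw [Finset.length_sort, hm]; omega
  have he1 : e ⟨1, h1m⟩ = Nat.nth Nat.Prime (r - 1) := by
    rw [← hsecond, getElem!_pos (Finset.sort S (· ≤ ·)) 1 hlen]
    rfl
  -- induction: lower bounds by nth primes
  have hstep : ∀ t (h : 1 + t < m), Nat.nth Nat.Prime (r - 1 + t) ≤ e ⟨1 + t, h⟩ := by
    intro t
    induction t with
    | zero => intro h; simpa using he1.ge
    | succ t ih =>
      intro h
      have hlt : 1 + t < m := by omega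
      have ih' := ih hlt
      have hmono : e ⟨1 + t, hlt⟩ < e ⟨1 + t + 1, h⟩ := by
        apply e.strictMono
        rw [Fin.mk_lt_mk]
        omega
      set q := e ⟨1 + t + 1, h⟩ with hq
      have hqp : q.Prime := heP _
      have hcq : Nat.nth Nat.Prime (Nat.count Nat.Prime q) = q :=
        Nat.nth_count hqp
      have hlt2 : Nat.nth Nat.Prime (r - 1 + t) < Nat.nth Nat.Prime (Nat.count Nat.Prime q) := by
        rw [hcq]; exact lt_of_le_of_lt ih' hmono
      have := (Nat.nth_lt_nth Nat.infinite_setOf_prime).mp hlt2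
      calc Nat.nth Nat.Prime (r - 1 + (t + 1)) ≤ Nat.nth Nat.Prime (Nat.count Nat.Prime q) := by
            apply (Nat.nth_le_nth Nat.infinite_setOf_prime).mpr
            omega
        _ = q := hcq
  -- F function on ℕ
  set F : ℕ → ℝ := fun i => if h : i < m then 1 + 1 / ((e ⟨i, h⟩ : ℕ) : ℝ) else 1 with hF
  have hSF : ∏ p ∈ S, (1 + 1 / (p : ℝ)) = ∏ i ∈ Finset.range m, F i := by
    rw [← Fin.prod_univ_eq_prod_range F m]
    symm
    apply Finset.prod_bij (fun (i : Fin m) _ => (e i : ℕ))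
    · exact fun i _ => Finset.orderEmbOfFin_mem S hm i
    · exact fun i _ j _ hij => e.injective hij
    · intro b hb
      have : b ∈ Set.range e := by rw [Finset.range_orderEmbOfFin]; exact hb
      obtain ⟨i, hi⟩ := this
      exact ⟨i, Finset.mem_univ i, hi⟩
    · intro i _
      simp only [hF, Fin.is_lt, dif_pos, Fin.eta]
  have h0m : 0 < m := by omega
  have hsplit : ∏ i ∈ Finset.range m, F i = F 0 * ∏ i ∈ Finset.Ico 1 m, F i := by
    rw [Finset.range_eq_Ico, Finset.prod_eq_prod_Ico_succ_bot h0m]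
  -- F 0 ≤ 4/3
  have hF0 : F 0 ≤ 4 / 3 := by
    have h3 : 3 ≤ e ⟨0, h0m⟩ := by
      have hp := heP ⟨0, h0m⟩
      have h2 : e ⟨0, h0m⟩ ≠ 2 := by
        intro h2
        have hmem := Finset.orderEmbOfFin_mem S hm ⟨0, h0m⟩
        rw [h2] at hmem
        have := Nat.dvd_of_mem_primeFactors hmem
        rw [Nat.odd_iff] at hodd
        omega
      have := hp.two_le
      omega
    rw [hF]
    simp only [h0m, dif_pos]
    have h3R : (3:ℝ) ≤ ((e ⟨0, h0m⟩ : ℕ) : ℝ) := by exact_mod_cast h3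
    have := one_div_le_one_div_of_le (by norm_num : (0:ℝ) < 3) h3R
    linarith
  -- pointwise bound on Ico 1 m
  have hFi : ∀ i ∈ Finset.Ico 1 m, F i ≤ 1 + 1 / (Nat.nth Nat.Prime (i + (r - 1) - 1) : ℝ) := by
    intro i hi
    rw [Finset.mem_Ico] at hi
    obtain ⟨hi1, him⟩ := hi
    have hidx : i + (r - 1) - 1 = r - 1 + (i - 1) := by omega
    have hb := hstep (i - 1) (by omega)
    have hieq : (⟨1 + (i - 1), by omega⟩ : Fin m) = ⟨i, him⟩ := by
      ext; simp; omega
    rw [hieq] at hb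
    rw [hF]
    simp only [him, dif_pos]
    rw [hidx]
    have hpos : 0 < Nat.nth Nat.Prime (r - 1 + (i - 1)) :=
      (Nat.prime_nth_prime _).pos
    have hposR : (0:ℝ) < (Nat.nth Nat.Prime (r - 1 + (i - 1)) : ℝ) := by exact_mod_cast hpos
    have hbR : (Nat.nth Nat.Prime (r - 1 + (i - 1)) : ℝ) ≤ ((e ⟨i, him⟩ : ℕ) : ℝ) := by
      exact_mod_cast hb
    have := one_div_le_one_div_of_le hposR hbR
    linarith
  -- products
  have hFnonneg : ∀ i ∈ Finset.Ico 1 m, (0:ℝ) ≤ F i := by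
    intro i hi
    simp only [hF]
    split_ifs with h
    · have : (0:ℝ) < ((e ⟨i, h⟩ : ℕ) : ℝ) := by exact_mod_cast (heP ⟨i, h⟩).pos
      positivity
    · norm_num
  have hprodle : ∏ i ∈ Finset.Ico 1 m, F i ≤
      ∏ i ∈ Finset.Ico 1 m, (1 + 1 / (Nat.nth Nat.Prime (i + (r - 1) - 1) : ℝ)) :=
    Finset.prod_le_prod hFnonneg hFi
  have hreindex : ∏ i ∈ Finset.Ico 1 m, (1 + 1 / (Nat.nth Nat.Prime (i + (r - 1) - 1) : ℝ)) =
      ∏ j ∈ Finset.Icc r (r + m - 2), (1 + 1 / (Nat.nth Nat.Prime (j - 1) : ℝ)) := by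
    apply Finset.prod_nbij' (fun a => a + (r - 1)) (fun b => b - (r - 1))
    · intro a ha; rw [Finset.mem_Ico] at ha; rw [Finset.mem_Icc]; omega
    · intro b hb; rw [Finset.mem_Icc] at hb; rw [Finset.mem_Ico]; omega
    · intro a ha; rw [Finset.mem_Ico] at ha; omega
    · intro b hb; rw [Finset.mem_Icc] at hb; omega
    · intro a _; rfl
  -- nth-prime product ≥ 1 terms and positivity
  have hprodnn : (0:ℝ) ≤ ∏ i ∈ Finset.Ico 1 m, F i := Finset.prod_nonneg hFnonneg
  have hmain := opn_prod n hn hodd hne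
  rw [hSF, hsplit] at hmain
  have hchain : F 0 * ∏ i ∈ Finset.Ico 1 m, F i ≤
      (4/3 : ℝ) * ∏ j ∈ Finset.Icc r (r + m - 2), (1 + 1 / (Nat.nth Nat.Prime (j - 1) : ℝ)) := by
    rw [← hreindex]
    apply mul_le_mul hF0 hprodle hprodnn (by norm_num)
  have : (1 + 1/3 : ℝ) = 4/3 := by norm_num
  rw [this]
  exact lt_of_lt_of_le hmain hchain
end

section
/- If n is an odd perfect number with exactly 9 distinct prime factors, then the smallest prime factor of n is at most 11. -/
open Finset

private lemma geom_nat (p m : ℕ) (hp : 1 ≤ p) :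
    (∑ k ∈ Finset.range m, p ^ k) * (p - 1) = p ^ m - 1 := by
  have h1 : 1 ≤ p ^ m := Nat.one_le_pow _ _ hp
  zify [hp, h1]
  exact geom_sum_mul (p : ℤ) m

private lemma prime_ge (p : ℕ) (hp : p.Prime) (h : 12 ≤ p) : p = 13 ∨ 17 ≤ p := by
  rcases lt_or_ge p 17 with h' | h'
  · interval_cases p <;> revert hp <;> decide
  · exact Or.inr h'

/-- If `n` is an odd perfect number with exactly 9 distinct prime factors, then the
smallest prime factor of `n` is at most 11. -/
theorem opn_nine_factors_minFac_le (n : ℕ) (hn : Nat.Perfect n) (hodd : Odd n)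
    (hω : n.primeFactors.card = 9) : n.minFac ≤ 11 := by
  by_contra hle
  push_neg at hle
  have hn0 : n ≠ 0 := hn.2.ne'
  set S := n.primeFactors with hS
  have hne : S.Nonempty := Finset.card_pos.mp (by rw [hω]; norm_num)
  have hmem : ∀ p ∈ S, p.Prime ∧ 12 ≤ p := by
    intro p hp
    have hpp := Nat.prime_of_mem_primeFactors hp
    have h2 : n.minFac ≤ p := Nat.minFac_le_of_dvd hpp.two_le (Nat.dvd_of_mem_primeFactors hp)
    exact ⟨hpp, by omega⟩
  -- Claim 1 : 2 * n * ∏ (p-1) < n * ∏ p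
  have hsum : 2 * n = ∏ p ∈ S, ∑ k ∈ Finset.range (n.factorization p + 1), p ^ k := by
    rw [← (Nat.perfect_iff_sum_divisors_eq_two_mul hn.2).mp hn]
    exact Nat.sum_divisors hn0
  have claim1 : 2 * n * ∏ p ∈ S, (p - 1) < n * ∏ p ∈ S, p := by
    have h1 : 2 * n * ∏ p ∈ S, (p - 1)
        = ∏ p ∈ S, ((∑ k ∈ Finset.range (n.factorization p + 1), p ^ k) * (p - 1)) := by
      rw [hsum, ← Finset.prod_mul_distrib]
    have hfac : (∏ p ∈ S, p ^ n.factorization p) = n := by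
      conv_rhs => rw [← Nat.factorization_prod_pow_eq_self hn0]
      rfl
    have h2 : (∏ p ∈ S, p ^ (n.factorization p + 1)) = n * ∏ p ∈ S, p := by
      calc (∏ p ∈ S, p ^ (n.factorization p + 1))
          = ∏ p ∈ S, (p ^ n.factorization p * p) :=
            Finset.prod_congr rfl fun p _ => pow_succ p _
        _ = (∏ p ∈ S, p ^ n.factorization p) * ∏ p ∈ S, p := Finset.prod_mul_distrib
        _ = n * ∏ p ∈ S, p := by rw [hfac]
    rw [h1, ← h2]
    apply Finset.prod_lt_prod_of_nonempty _ _ hne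
    · intro p hp
      have ⟨hpp, h12⟩ := hmem p hp
      rw [geom_nat _ _ hpp.one_lt.le]
      have : 2 ≤ p ^ (n.factorization p + 1) := le_trans hpp.two_le (Nat.le_self_pow (by omega) p)
      omega
    · intro p hp
      have ⟨hpp, h12⟩ := hmem p hp
      rw [geom_nat _ _ hpp.one_lt.le]
      have : 1 ≤ p ^ (n.factorization p + 1) := Nat.one_le_pow _ _ hpp.pos
      omega
  -- Claim 2 : ∏ p ≤ 2 * ∏ (p-1)
  have hpt : ∀ p ∈ S, p ≠ 13 → 16 * p ≤ 17 * (p - 1) := by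
    intro p hp h13
    have ⟨hpp, h12⟩ := hmem p hp
    rcases prime_ge p hpp h12 with h | h
    · exact absurd h h13
    · omega
  have key : 12 * 16 ^ 8 * ∏ p ∈ S, p ≤ 13 * 17 ^ 8 * ∏ p ∈ S, (p - 1) := by
    by_cases h13 : 13 ∈ S
    · set T := S.erase 13 with hT
      have hcT : T.card = 8 := by rw [hT, Finset.card_erase_of_mem h13, hω]
      have hP : (∏ p ∈ S, p) = 13 * ∏ p ∈ T, p := (Finset.mul_prod_erase S _ h13).symm
      have hA : (∏ p ∈ S, (p - 1)) = 12 * ∏ p ∈ T, (p - 1) :=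
        (Finset.mul_prod_erase S (fun p => p - 1) h13).symm
      have hprod : (∏ p ∈ T, 16 * p) ≤ ∏ p ∈ T, 17 * (p - 1) := by
        apply Finset.prod_le_prod'
        intro p hp
        exact hpt p (Finset.mem_of_mem_erase hp) (Finset.ne_of_mem_erase hp)
      rw [Finset.prod_mul_distrib, Finset.prod_mul_distrib, Finset.prod_const, Finset.prod_const,
        hcT] at hprod
      rw [hP, hA]
      calc 12 * 16 ^ 8 * (13 * ∏ p ∈ T, p) = 12 * 13 * (16 ^ 8 * ∏ p ∈ T, p) := by ring
        _ ≤ 12 * 13 * (17 ^ 8 * ∏ p ∈ T, (p - 1)) := Nat.mul_le_mul_left _ hprod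
        _ = 13 * 17 ^ 8 * (12 * ∏ p ∈ T, (p - 1)) := by ring
    · have hprod : (∏ p ∈ S, 16 * p) ≤ ∏ p ∈ S, 17 * (p - 1) := by
        apply Finset.prod_le_prod'
        intro p hp
        exact hpt p hp (fun h => h13 (h ▸ hp))
      rw [Finset.prod_mul_distrib, Finset.prod_mul_distrib, Finset.prod_const, Finset.prod_const,
        hω] at hprod
      have h16 : 16 * (12 * 16 ^ 8 * ∏ p ∈ S, p) ≤ 16 * (13 * 17 ^ 8 * ∏ p ∈ S, (p - 1)) := by
        calc 16 * (12 * 16 ^ 8 * ∏ p ∈ S, p) = 12 * (16 ^ 9 * ∏ p ∈ S, p) := by ring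
          _ ≤ 12 * (17 ^ 9 * ∏ p ∈ S, (p - 1)) := Nat.mul_le_mul_left _ hprod
          _ = (12 * 17) * (17 ^ 8 * ∏ p ∈ S, (p - 1)) := by ring
          _ ≤ (16 * 13) * (17 ^ 8 * ∏ p ∈ S, (p - 1)) := Nat.mul_le_mul_right _ (by norm_num)
          _ = 16 * (13 * 17 ^ 8 * ∏ p ∈ S, (p - 1)) := by ring
      exact Nat.le_of_mul_le_mul_left h16 (by norm_num)
  have claim2 : (∏ p ∈ S, p) ≤ 2 * ∏ p ∈ S, (p - 1) := by
    have h2 : 13 * 17 ^ 8 * ∏ p ∈ S, (p - 1) ≤ 12 * 16 ^ 8 * (2 * ∏ p ∈ S, (p - 1)) := by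
      calc 13 * 17 ^ 8 * ∏ p ∈ S, (p - 1) ≤ (2 * (12 * 16 ^ 8)) * ∏ p ∈ S, (p - 1) :=
            Nat.mul_le_mul_right _ (by norm_num)
        _ = 12 * 16 ^ 8 * (2 * ∏ p ∈ S, (p - 1)) := by ring
    exact Nat.le_of_mul_le_mul_left (key.trans h2) (by norm_num)
  have := calc n * ∏ p ∈ S, p ≤ n * (2 * ∏ p ∈ S, (p - 1)) := Nat.mul_le_mul_left _ claim2
    _ = 2 * n * ∏ p ∈ S, (p - 1) := by ring
  omega
end

section
/- If n is an odd perfect number with exactly 9 distinct prime factors, then the second smallest prime factor of n is at most 31. -/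
lemma opn_aux_geom (p e : ℕ) (hp : 2 ≤ p) :
    (∑ k ∈ Finset.range (e + 1), p ^ k) * (p - 1) < p ^ e * p := by
  have h : ((∑ k ∈ Finset.range (e + 1), (p:ℤ) ^ k)) * ((p:ℤ) - 1) = (p:ℤ) ^ (e+1) - 1 :=
    geom_sum_mul (p:ℤ) (e+1)
  zify [show 1 ≤ p by omega]
  push_cast at h
  rw [h, ← pow_succ]
  have : (0:ℤ) < (p:ℤ) ^ (e+1) := by positivity
  omega

lemma opn_aux_key (n : ℕ) (hn : 2 ≤ n) (hperf : Nat.Perfect n) :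
    2 * ∏ p ∈ n.primeFactors, (p - 1) < ∏ p ∈ n.primeFactors, p := by
  have hn0 : n ≠ 0 := by omega
  have hsum : ∑ d ∈ n.divisors, d = 2 * n :=
    (Nat.perfect_iff_sum_divisors_eq_two_mul (by omega)).mp hperf
  have hσ : 2 * n = ∏ p ∈ n.primeFactors, ∑ k ∈ Finset.range (n.factorization p + 1), p ^ k := by
    rw [← hsum]; exact Nat.sum_divisors hn0
  have hfac : n = ∏ p ∈ n.primeFactors, p ^ n.factorization p := by
    conv_lhs => rw [← Nat.factorization_prod_pow_eq_self hn0]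
    rw [Finsupp.prod, Nat.support_factorization]
  have hne : n.primeFactors.Nonempty := Nat.nonempty_primeFactors.mpr hn
  have hmain : (∏ p ∈ n.primeFactors, ∑ k ∈ Finset.range (n.factorization p + 1), p ^ k) *
      ∏ p ∈ n.primeFactors, (p - 1) < (∏ p ∈ n.primeFactors, p ^ n.factorization p) *
      ∏ p ∈ n.primeFactors, p := by
    rw [← Finset.prod_mul_distrib, ← Finset.prod_mul_distrib]
    refine Finset.prod_lt_prod_of_nonempty ?_ ?_ hne
    · intro p hp
      have hp2 := (Nat.prime_of_mem_primeFactors hp).two_le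
      have h1 : 0 < ∑ k ∈ Finset.range (n.factorization p + 1), p ^ k :=
        Finset.sum_pos (fun k _ => by positivity) ⟨0, by simp⟩
      have h2 : 0 < p - 1 := by omega
      exact Nat.mul_pos h1 h2
    · intro p hp
      exact opn_aux_geom p _ (Nat.prime_of_mem_primeFactors hp).two_le
  rw [← hσ, ← hfac] at hmain
  have hrw : (2 * n) * ∏ p ∈ n.primeFactors, (p - 1)
      = n * (2 * ∏ p ∈ n.primeFactors, (p - 1)) := by ring
  rw [hrw] at hmain
  exact Nat.lt_of_mul_lt_mul_left hmain

/-- If `n` is an odd perfect number with exactly 9 distinct prime factors, then the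
second smallest prime factor of `n` is at most 31. -/
theorem opn_nine_factors_second_le (n : ℕ) (hn : Nat.Perfect n) (hodd : Odd n)
    (hω : n.primeFactors.card = 9) :
    (Finset.sort n.primeFactors (· ≤ ·))[1]! ≤ 31 := by
  have hne : n.primeFactors.Nonempty := by
    rw [← Finset.card_pos, hω]; norm_num
  have hn2 : 2 ≤ n := Nat.nonempty_primeFactors.mp hne
  have key := opn_aux_key n hn2 hn
  have hlen : (Finset.sort n.primeFactors (· ≤ ·)).length = 9 := by
    rw [Finset.length_sort, hω]
  obtain ⟨p1, p2, p3, p4, p5, p6, p7, p8, p9, hL⟩ :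
      ∃ p1 p2 p3 p4 p5 p6 p7 p8 p9,
        Finset.sort n.primeFactors (· ≤ ·) = [p1, p2, p3, p4, p5, p6, p7, p8, p9] := by
    set L := Finset.sort n.primeFactors (· ≤ ·) with hLdef
    clear_value L
    match L, hlen with
    | [a1,a2,a3,a4,a5,a6,a7,a8,a9], _ => exact ⟨a1,a2,a3,a4,a5,a6,a7,a8,a9, rfl⟩
  have hsort : List.Pairwise (· < ·) [p1, p2, p3, p4, p5, p6, p7, p8, p9] := by
    rw [← hL]; exact (Finset.sortedLT_sort _).pairwise
  simp only [List.pairwise_cons, List.mem_cons, List.mem_singleton, List.not_mem_nil] at hsort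
  have hmem : ∀ x ∈ [p1, p2, p3, p4, p5, p6, p7, p8, p9], x ∈ n.primeFactors := by
    intro x hx
    rw [← Finset.mem_sort (r := (· ≤ ·)), hL]; exact hx
  have hprod : ∀ f : ℕ → ℕ, ∏ p ∈ n.primeFactors, f p =
      f p1 * (f p2 * (f p3 * (f p4 * (f p5 * (f p6 * (f p7 * (f p8 * f p9))))))) := by
    intro f
    rw [← Finset.prod_map_toList]
    have hperm : List.Perm ((Finset.sort n.primeFactors (· ≤ ·)).map f)
        (n.primeFactors.toList.map f) :=
      (Finset.sort_perm_toList _ _).map f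
    rw [← hperm.prod_eq, hL]
    simp [mul_assoc]
  have hprodid := hprod id
  simp only [id] at hprodid
  rw [hprod (· - 1), hprodid] at key
  rw [hL]
  obtain ⟨hs1, hs2, hs3, hs4, hs5, hs6, hs7, hs8, -, -⟩ := hsort
  have o12 : p1 < p2 := hs1 p2 (by tauto)
  have o23 : p2 < p3 := hs2 p3 (by tauto)
  have o34 : p3 < p4 := hs3 p4 (by tauto)
  have o45 : p4 < p5 := hs4 p5 (by tauto)
  have o56 : p5 < p6 := hs5 p6 (by tauto)
  have o67 : p6 < p7 := hs6 p7 (by tauto)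
  have o78 : p7 < p8 := hs7 p8 (by tauto)
  have o89 : p8 < p9 := hs8 p9 (by tauto)
  suffices h : p2 ≤ 31 by simpa using h
  by_contra hc
  push_neg at hc
  have hp2 : 32 ≤ p2 := hc
  -- extract primality facts
  have prime1 : p1.Prime := Nat.prime_of_mem_primeFactors (hmem p1 (by simp))
  have prime2 : p2.Prime := Nat.prime_of_mem_primeFactors (hmem p2 (by simp))
  have prime3 : p3.Prime := Nat.prime_of_mem_primeFactors (hmem p3 (by simp))
  have prime4 : p4.Prime := Nat.prime_of_mem_primeFactors (hmem p4 (by simp))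
  have prime5 : p5.Prime := Nat.prime_of_mem_primeFactors (hmem p5 (by simp))
  have prime6 : p6.Prime := Nat.prime_of_mem_primeFactors (hmem p6 (by simp))
  have prime7 : p7.Prime := Nat.prime_of_mem_primeFactors (hmem p7 (by simp))
  have prime8 : p8.Prime := Nat.prime_of_mem_primeFactors (hmem p8 (by simp))
  have prime9 : p9.Prime := Nat.prime_of_mem_primeFactors (hmem p9 (by simp))
  -- p1 is odd
  have hndvd : ¬ (2 ∣ n) := by
    have := Nat.odd_iff.mp hodd
    omega
  have hp1ne2 : p1 ≠ 2 := by
    intro h2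
    exact hndvd (h2 ▸ Nat.dvd_of_mem_primeFactors (hmem p1 (by simp)))
  have b1 : 3 ≤ p1 := by have := prime1.two_le; omega
  have b2 : 37 ≤ p2 := by
    by_contra hx; push_neg at hx
    interval_cases p2 <;> norm_num at prime2
  have b3 : 41 ≤ p3 := by
    have : 38 ≤ p3 := by omega
    by_contra hx; push_neg at hx
    interval_cases p3 <;> norm_num at prime3
  have b4 : 43 ≤ p4 := by
    have : 42 ≤ p4 := by omega
    by_contra hx; push_neg at hx
    interval_cases p4 <;> norm_num at prime4
  have b5 : 47 ≤ p5 := by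
    have : 44 ≤ p5 := by omega
    by_contra hx; push_neg at hx
    interval_cases p5 <;> norm_num at prime5
  have b6 : 53 ≤ p6 := by
    have : 48 ≤ p6 := by omega
    by_contra hx; push_neg at hx
    interval_cases p6 <;> norm_num at prime6
  have b7 : 59 ≤ p7 := by
    have : 54 ≤ p7 := by omega
    by_contra hx; push_neg at hx
    interval_cases p7 <;> norm_num at prime7
  have b8 : 61 ≤ p8 := by
    have : 60 ≤ p8 := by omega
    by_contra hx; push_neg at hx
    interval_cases p8 <;> norm_num at prime8
  have b9 : 67 ≤ p9 := by
    have : 62 ≤ p9 := by omega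
    by_contra hx; push_neg at hx
    interval_cases p9 <;> norm_num at prime9
  -- per-factor inequalities
  have m1 : p1 * 2 ≤ 3 * (p1 - 1) := by omega
  have m2 : p2 * 36 ≤ 37 * (p2 - 1) := by omega
  have m3 : p3 * 40 ≤ 41 * (p3 - 1) := by omega
  have m4 : p4 * 42 ≤ 43 * (p4 - 1) := by omega
  have m5 : p5 * 46 ≤ 47 * (p5 - 1) := by omega
  have m6 : p6 * 52 ≤ 53 * (p6 - 1) := by omega
  have m7 : p7 * 58 ≤ 59 * (p7 - 1) := by omega
  have m8 : p8 * 60 ≤ 61 * (p8 - 1) := by omega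
  have m9 : p9 * 66 ≤ 67 * (p9 - 1) := by omega
  set X := p1 * (p2 * (p3 * (p4 * (p5 * (p6 * (p7 * (p8 * p9))))))) with hX
  set Y := (p1-1) * ((p2-1) * ((p3-1) * ((p4-1) * ((p5-1) * ((p6-1) * ((p7-1) *
      ((p8-1) * (p9-1)))))))) with hY
  have big : X * (2*36*40*42*46*52*58*60*66) ≤ (3*37*41*43*47*53*59*61*67) * Y := by
    calc X * (2*36*40*42*46*52*58*60*66)
        = (p1*2) * ((p2*36) * ((p3*40) * ((p4*42) * ((p5*46) * ((p6*52) * ((p7*58) *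
          ((p8*60) * (p9*66)))))))) := by rw [hX]; ring
      _ ≤ (3*(p1-1)) * ((37*(p2-1)) * ((41*(p3-1)) * ((43*(p4-1)) * ((47*(p5-1)) *
          ((53*(p6-1)) * ((59*(p7-1)) * ((61*(p8-1)) * (67*(p9-1))))))))) := by
          gcongr
      _ = (3*37*41*43*47*53*59*61*67) * Y := by rw [hY]; ring
  have hfin : X * (2*36*40*42*46*52*58*60*66) < X * (2*36*40*42*46*52*58*60*66) := by
    calc X * (2*36*40*42*46*52*58*60*66)
        ≤ (3*37*41*43*47*53*59*61*67) * Y := big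
      _ ≤ (2 * (2*36*40*42*46*52*58*60*66)) * Y := by
          have : (3*37*41*43*47*53*59*61*67 : ℕ) ≤ 2 * (2*36*40*42*46*52*58*60*66) := by
            norm_num
          exact Nat.mul_le_mul_right _ this
      _ = (2*36*40*42*46*52*58*60*66) * (2 * Y) := by ring
      _ < (2*36*40*42*46*52*58*60*66) * X :=
          (mul_lt_mul_iff_right₀ (by norm_num : (0:ℕ) < 2*36*40*42*46*52*58*60*66)).mpr key
      _ = X * (2*36*40*42*46*52*58*60*66) := by ring
  exact absurd hfin (lt_irrefl _)
end

section
/- If n is an odd perfect number with exactly 12 distinct prime factors, then the smallest prime factor of n is at most 13. -/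
open Finset

/-- For a finset of odd naturals all at least `m`, the product of `p/(p-1)` is bounded
by the corresponding product over `m, m+2, m+4, ...`. -/
lemma opn_aux_ratio : ∀ (k : ℕ) (m : ℕ), 3 ≤ m → ∀ (S : Finset ℕ), S.card = k →
    (∀ p ∈ S, Odd p ∧ m ≤ p) →
    (∏ p ∈ S, (p : ℚ) / ((p : ℚ) - 1)) ≤
      ∏ i ∈ range k, ((m + 2 * i : ℕ) : ℚ) / (((m + 2 * i : ℕ) : ℚ) - 1) := by
  intro k
  induction k with
  | zero =>
    intro m hm S hS h
    rw [Finset.card_eq_zero.mp hS]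
    simp
  | succ k ih =>
    intro m hm S hS h
    have hne : S.Nonempty := Finset.card_pos.mp (by omega)
    set a := S.min' hne with ha
    have haS : a ∈ S := S.min'_mem hne
    obtain ⟨haodd, ham⟩ := h a haS
    have ha3 : 3 ≤ a := le_trans hm ham
    have hS' : (S.erase a).card = k := by
      rw [Finset.card_erase_of_mem haS, hS]
      omega
    have h' : ∀ p ∈ S.erase a, Odd p ∧ m + 2 ≤ p := by
      intro p hp
      have hpS : p ∈ S := Finset.mem_of_mem_erase hp
      obtain ⟨hpodd, hpm⟩ := h p hpS
      have hpa : a ≤ p := S.min'_le p hpS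
      have hpne : p ≠ a := Finset.ne_of_mem_erase hp
      have : a + 2 ≤ p := by
        rcases haodd with ⟨x, hx⟩; rcases hpodd with ⟨y, hy⟩; omega
      exact ⟨hpodd, by omega⟩
    have key := ih (m + 2) (by omega) (S.erase a) hS' h'
    rw [← Finset.mul_prod_erase S _ haS]
    rw [Finset.prod_range_succ']
    have hnonneg : ∀ p ∈ S.erase a, (0:ℚ) ≤ (p : ℚ) / ((p : ℚ) - 1) := by
      intro p hp
      obtain ⟨_, hpm⟩ := h' p hp
      have : (3:ℚ) ≤ (p:ℚ) := by exact_mod_cast by omega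
      apply div_nonneg <;> linarith
    have hfac : ((a : ℚ) / ((a : ℚ) - 1)) ≤ ((m : ℚ) / ((m : ℚ) - 1)) := by
      have hm' : (3:ℚ) ≤ (m:ℚ) := by exact_mod_cast hm
      have ha' : (m:ℚ) ≤ (a:ℚ) := by exact_mod_cast ham
      rw [div_le_div_iff₀ (by linarith) (by linarith)]
      nlinarith
    have hgoal1 : (∏ p ∈ S.erase a, (p : ℚ) / ((p : ℚ) - 1)) ≤
        ∏ i ∈ range k, ((m + 2 + 2 * i : ℕ) : ℚ) / (((m + 2 + 2 * i : ℕ) : ℚ) - 1) := key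
    calc ((a : ℚ) / ((a : ℚ) - 1)) * ∏ p ∈ S.erase a, (p : ℚ) / ((p : ℚ) - 1)
        ≤ ((m : ℚ) / ((m : ℚ) - 1)) *
          ∏ i ∈ range k, ((m + 2 + 2 * i : ℕ) : ℚ) / (((m + 2 + 2 * i : ℕ) : ℚ) - 1) := by
          apply mul_le_mul hfac hgoal1 (Finset.prod_nonneg hnonneg)
          have hm' : (3:ℚ) ≤ (m:ℚ) := by exact_mod_cast hm
          apply div_nonneg <;> linarith
      _ = (∏ i ∈ range k, ((m + 2 * (i + 1) : ℕ) : ℚ) / (((m + 2 * (i + 1) : ℕ) : ℚ) - 1)) *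
          (((m + 2 * 0 : ℕ) : ℚ) / (((m + 2 * 0 : ℕ) : ℚ) - 1)) := by
          rw [mul_comm]
          congr 1
          · apply Finset.prod_congr rfl
            intro i _
            have he : m + 2 + 2 * i = m + 2 * (i + 1) := by ring
            rw [he]

/-- If `n` is an odd perfect number with exactly 12 distinct prime factors, then the
smallest prime factor of `n` is at most 13. -/
theorem opn_twelve_factors_minFac_le (n : ℕ) (hn : Nat.Perfect n) (hodd : Odd n)
    (hω : n.primeFactors.card = 12) : n.minFac ≤ 13 := by
  by_contra hcon
  push_neg at hcon
  have hn0 : 0 < n := hn.2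
  have hne : n ≠ 0 := hn0.ne'
  have hsum : ∑ d ∈ n.divisors, d = 2 * n :=
    (Nat.perfect_iff_sum_divisors_eq_two_mul hn0).mp hn
  have hfact : ∑ d ∈ n.divisors, d =
      ∏ p ∈ n.primeFactors, ∑ k ∈ Finset.range (n.factorization p + 1), p ^ k :=
    Nat.sum_divisors hne
  have hnn : n = ∏ p ∈ n.primeFactors, p ^ n.factorization p :=
    (Nat.factorization_prod_pow_eq_self hne).symm
  -- every prime factor is odd and ≥ 15
  have hP : ∀ p ∈ n.primeFactors, Odd p ∧ 15 ≤ p := by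
    intro p hp
    have hpp : p.Prime := Nat.prime_of_mem_primeFactors hp
    have hpd : p ∣ n := Nat.dvd_of_mem_primeFactors hp
    have hmin : n.minFac ≤ p := Nat.minFac_le_of_dvd hpp.two_le hpd
    have hpodd : Odd p := by
      rcases hpp.eq_two_or_odd' with h2 | h
      · exfalso
        rw [h2] at hpd
        rcases hodd with ⟨x, hx⟩
        omega
      · exact h
    rcases hpodd with ⟨x, hx⟩
    exact ⟨⟨x, hx⟩, by omega⟩
  -- key inequality in ℚ : 2 ≤ ∏ p/(p-1)
  have key : (2 : ℚ) ≤ ∏ p ∈ n.primeFactors, (p : ℚ) / ((p : ℚ) - 1) := by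
    have h2n : ((2 * n : ℕ) : ℚ) =
        ∏ p ∈ n.primeFactors, ((∑ k ∈ Finset.range (n.factorization p + 1), p ^ k : ℕ) : ℚ) := by
      rw [← hsum, hfact, Nat.cast_prod]
    have hnq : (n : ℚ) = ∏ p ∈ n.primeFactors, ((p : ℚ) ^ n.factorization p) := by
      conv_lhs => rw [hnn]
      push_cast; rfl
    have h2 : (2 : ℚ) = ∏ p ∈ n.primeFactors,
        (((∑ k ∈ Finset.range (n.factorization p + 1), p ^ k : ℕ) : ℚ) /
          ((p : ℚ) ^ n.factorization p)) := by
      rw [Finset.prod_div_distrib, ← h2n, ← hnq]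
      have : (n : ℚ) ≠ 0 := Nat.cast_ne_zero.mpr hne
      field_simp
      push_cast; ring
    rw [h2]
    apply Finset.prod_le_prod
    · intro p hp
      positivity
    · intro p hp
      obtain ⟨_, hp15⟩ := hP p hp
      have hpq : (15 : ℚ) ≤ (p : ℚ) := by exact_mod_cast hp15
      have hpow : (0:ℚ) < (p : ℚ) ^ n.factorization p := by positivity
      rw [div_le_div_iff₀ hpow (by linarith)]
      -- (∑ p^k) * (p - 1) = p^(e+1) - 1 ≤ p^(e+1) = p * p^e
      push_cast
      have hgeom : (∑ k ∈ Finset.range (n.factorization p + 1), (p:ℚ) ^ k) * ((p:ℚ) - 1)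
          = (p:ℚ) ^ (n.factorization p + 1) - 1 := geom_sum_mul (p:ℚ) _
      rw [hgeom, pow_succ]
      nlinarith [pow_pos (by linarith : (0:ℚ) < (p:ℚ)) (n.factorization p)]
  -- combinatorial bound : ∏ p/(p-1) ≤ ∏_{i<12} (15+2i)/(14+2i) < 2
  have hb := opn_aux_ratio 12 15 (by norm_num) n.primeFactors hω hP
  have hnum : (∏ i ∈ range 12, ((15 + 2 * i : ℕ) : ℚ) / (((15 + 2 * i : ℕ) : ℚ) - 1)) < 2 := by
    simp [Finset.prod_range_succ]
    norm_num
  linarith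
end
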